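/- arXiv:0904.0814 — 10 statements merged into one kernel-verified Lean document; each statement's English description precedes it below -/
import Mathlib

section
/- Let the hypothesis set be bounded by B > 0 and let the transductive algorithm be uniformly β-cost-stable. Then for any two size-m training sets S and S' that differ in exactly one point, |φ(S) − φ(S')| ≤ 2β + B²·(m+u)/(mu). -/
/-- Lemma 4: if the hypothesis set is bounded by `B` and the transductive algorithm is
uniformly `β`-cost-stable, then for training sets `S, S'` of size `m` differing in
exactly one point, `|φ(S) − φ(S')| ≤ 2β + B²(m+u)/(mu)`, where
`φ(S) = R(h_S) − R̂(h_S)`. -/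
theorem stmt_2 {V : Type*} [Fintype V] [DecidableEq V] (m u : ℕ) (hm : 1 ≤ m) (hu : 1 ≤ u)
    (hcard : Fintype.card V = m + u)
    (y : V → ℝ) (h : Finset V → V → ℝ) (B β : ℝ) (hB : 0 < B)
    (hbound : ∀ S : Finset V, S.card = m → ∀ x : V, |h S x - y x| ≤ B)
    (hstable : ∀ S S' : Finset V, S.card = m → S'.card = m → (S \ S').card = 1 →
      ∀ x : V, |(h S' x - y x) ^ 2 - (h S x - y x) ^ 2| ≤ β)
    (S S' : Finset V) (hS : S.card = m) (hS' : S'.card = m) (hdiff : (S \ S').card = 1) :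
    |((1 / (u : ℝ)) * ∑ x ∈ Sᶜ, (h S x - y x) ^ 2
        - (1 / (m : ℝ)) * ∑ x ∈ S, (h S x - y x) ^ 2)
      - ((1 / (u : ℝ)) * ∑ x ∈ S'ᶜ, (h S' x - y x) ^ 2
        - (1 / (m : ℝ)) * ∑ x ∈ S', (h S' x - y x) ^ 2)|
      ≤ 2 * β + B ^ 2 * ((m : ℝ) + u) / ((m : ℝ) * u) := by
  have hm' : (1:ℝ) ≤ (m:ℝ) := by exact_mod_cast hm
  have hu' : (1:ℝ) ≤ (u:ℝ) := by exact_mod_cast hu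
  have hmpos : (0:ℝ) < m := by linarith
  have hupos : (0:ℝ) < u := by linarith
  obtain ⟨x₁, hx₁⟩ := Finset.card_eq_one.mp hdiff
  have hdiff' : (S' \ S).card = 1 := by
    rw [← Finset.card_sdiff_comm (hS.trans hS'.symm)]; exact hdiff
  obtain ⟨x₂, hx₂⟩ := Finset.card_eq_one.mp hdiff'
  set cS : V → ℝ := fun x => (h S x - y x) ^ 2 with hcSdef
  set cS' : V → ℝ := fun x => (h S' x - y x) ^ 2 with hcS'def
  have hst : ∀ x, |cS' x - cS x| ≤ β := hstable S S' hS hS' hdiff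
  have hβ : 0 ≤ β := le_trans (abs_nonneg _) (hst x₁)
  have hbS : ∀ x, 0 ≤ cS x ∧ cS x ≤ B ^ 2 := by
    intro x
    have h1 := abs_le.mp (hbound S hS x)
    show 0 ≤ (h S x - y x) ^ 2 ∧ (h S x - y x) ^ 2 ≤ B ^ 2
    exact ⟨by positivity, by nlinarith [h1.1, h1.2]⟩
  have hbS' : ∀ x, 0 ≤ cS' x ∧ cS' x ≤ B ^ 2 := by
    intro x
    have h1 := abs_le.mp (hbound S' hS' x)
    show 0 ≤ (h S' x - y x) ^ 2 ∧ (h S' x - y x) ^ 2 ≤ B ^ 2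
    exact ⟨by positivity, by nlinarith [h1.1, h1.2]⟩
  -- sum splittings
  have hsum1 : ∑ x ∈ S, cS x = ∑ x ∈ S ∩ S', cS x + cS x₁ := by
    rw [← Finset.sum_inter_add_sum_sdiff S S' cS, hx₁, Finset.sum_singleton]
  have hsum2 : ∑ x ∈ S', cS' x = ∑ x ∈ S ∩ S', cS' x + cS' x₂ := by
    rw [← Finset.sum_inter_add_sum_sdiff S' S cS', hx₂, Finset.sum_singleton,
      Finset.inter_comm]
  have hc1 : Sᶜ \ S'ᶜ = S' \ S := by
    ext x; simp only [Finset.mem_sdiff, Finset.mem_compl, not_not]; tauto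
  have hc2 : S'ᶜ \ Sᶜ = S \ S' := by
    ext x; simp only [Finset.mem_sdiff, Finset.mem_compl, not_not]; tauto
  have hsum3 : ∑ x ∈ Sᶜ, cS x = ∑ x ∈ Sᶜ ∩ S'ᶜ, cS x + cS x₂ := by
    rw [← Finset.sum_inter_add_sum_sdiff Sᶜ S'ᶜ cS, hc1, hx₂, Finset.sum_singleton]
  have hsum4 : ∑ x ∈ S'ᶜ, cS' x = ∑ x ∈ Sᶜ ∩ S'ᶜ, cS' x + cS' x₁ := by
    rw [← Finset.sum_inter_add_sum_sdiff S'ᶜ Sᶜ cS', hc2, hx₁, Finset.sum_singleton,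
      Finset.inter_comm]
  -- cardinalities
  have hInat : (S ∩ S').card + 1 = m := by
    have := Finset.card_inter_add_card_sdiff S S'
    omega
  have hI : ((S ∩ S').card : ℝ) + 1 = m := by exact_mod_cast hInat
  have hJnat : (Sᶜ ∩ S'ᶜ).card + 1 = u := by
    have h1 : (S' \ S).card + S.card = (S' ∪ S).card := Finset.card_sdiff_add_card S' S
    have h2 : (S' ∪ S)ᶜ = S'ᶜ ∩ Sᶜ := Finset.compl_union S' S
    have h3 : (S' ∪ S)ᶜ.card = Fintype.card V - (S' ∪ S).card := Finset.card_compl _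
    have h4 : (S' ∪ S).card ≤ Fintype.card V := Finset.card_le_univ _
    have h5 : (Sᶜ ∩ S'ᶜ).card = (S'ᶜ ∩ Sᶜ).card := by rw [Finset.inter_comm]
    have h6 : (S' ∪ S)ᶜ.card = (S'ᶜ ∩ Sᶜ).card := by rw [h2]
    omega
  have hJ : ((Sᶜ ∩ S'ᶜ).card : ℝ) + 1 = u := by exact_mod_cast hJnat
  -- bounds on the sums over the common parts
  have hDI : |∑ x ∈ S ∩ S', (cS x - cS' x)| ≤ ((S ∩ S').card : ℝ) * β := by
    refine (Finset.abs_sum_le_sum_abs _ _).trans ?_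
    have := Finset.sum_le_card_nsmul (S ∩ S') (fun x => |cS x - cS' x|) β
      (fun x _ => by simpa [abs_sub_comm] using hst x)
    simpa [nsmul_eq_mul] using this
  have hDJ : |∑ x ∈ Sᶜ ∩ S'ᶜ, (cS x - cS' x)| ≤ ((Sᶜ ∩ S'ᶜ).card : ℝ) * β := by
    refine (Finset.abs_sum_le_sum_abs _ _).trans ?_
    have := Finset.sum_le_card_nsmul (Sᶜ ∩ S'ᶜ) (fun x => |cS x - cS' x|) β
      (fun x _ => by simpa [abs_sub_comm] using hst x)
    simpa [nsmul_eq_mul] using this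
  -- cross terms
  have hcr1 : |cS x₂ - cS' x₁| ≤ B ^ 2 :=
    abs_le.mpr ⟨by linarith [(hbS x₂).1, (hbS' x₁).2], by linarith [(hbS x₂).2, (hbS' x₁).1]⟩
  have hcr2 : |cS x₁ - cS' x₂| ≤ B ^ 2 :=
    abs_le.mpr ⟨by linarith [(hbS x₁).1, (hbS' x₂).2], by linarith [(hbS x₁).2, (hbS' x₂).1]⟩
  -- rewrite the expression
  have hrw : ((1 / (u : ℝ)) * ∑ x ∈ Sᶜ, cS x - (1 / (m : ℝ)) * ∑ x ∈ S, cS x)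
      - ((1 / (u : ℝ)) * ∑ x ∈ S'ᶜ, cS' x - (1 / (m : ℝ)) * ∑ x ∈ S', cS' x)
      = (1 / (u : ℝ)) * (∑ x ∈ Sᶜ ∩ S'ᶜ, (cS x - cS' x))
        + (1 / (u : ℝ)) * (cS x₂ - cS' x₁)
        - (1 / (m : ℝ)) * (∑ x ∈ S ∩ S', (cS x - cS' x))
        - (1 / (m : ℝ)) * (cS x₁ - cS' x₂) := by
    rw [hsum1, hsum2, hsum3, hsum4, Finset.sum_sub_distrib, Finset.sum_sub_distrib]
    ring
  rw [hrw]
  have tri : ∀ a b c d : ℝ, |a + b - c - d| ≤ |a| + |b| + |c| + |d| := by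
    intro a b c d
    have he : a + b - c - d = (a + b) + (-c + -d) := by ring
    rw [he]
    refine (abs_add_le _ _).trans ?_
    have h1 := abs_add_le (-c) (-d)
    rw [abs_neg, abs_neg] at h1
    have h2 := abs_add_le a b
    linarith
  refine (tri _ _ _ _).trans ?_
  rw [abs_mul, abs_mul, abs_mul, abs_mul]
  have hau : |(1 / (u : ℝ))| = 1 / (u:ℝ) := abs_of_pos (by positivity)
  have ham : |(1 / (m : ℝ))| = 1 / (m:ℝ) := abs_of_pos (by positivity)
  rw [hau, ham]
  have step : (1 / (u:ℝ)) * |∑ x ∈ Sᶜ ∩ S'ᶜ, (cS x - cS' x)| + (1 / (u:ℝ)) * |cS x₂ - cS' x₁|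
      + (1 / (m:ℝ)) * |∑ x ∈ S ∩ S', (cS x - cS' x)| + (1 / (m:ℝ)) * |cS x₁ - cS' x₂|
      ≤ (1 / (u:ℝ)) * (((u:ℝ) - 1) * β + B ^ 2) + (1 / (m:ℝ)) * (((m:ℝ) - 1) * β + B ^ 2) := by
    have e1 : ((Sᶜ ∩ S'ᶜ).card : ℝ) = (u:ℝ) - 1 := by linarith
    have e2 : ((S ∩ S').card : ℝ) = (m:ℝ) - 1 := by linarith
    rw [e1] at hDJ; rw [e2] at hDI
    have hu0 : (0:ℝ) ≤ 1 / (u:ℝ) := by positivity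
    have hm0 : (0:ℝ) ≤ 1 / (m:ℝ) := by positivity
    linarith [mul_le_mul_of_nonneg_left hDJ hu0, mul_le_mul_of_nonneg_left hcr1 hu0,
      mul_le_mul_of_nonneg_left hDI hm0, mul_le_mul_of_nonneg_left hcr2 hm0]
  refine step.trans ?_
  have e : 2 * β + B ^ 2 * ((m : ℝ) + u) / ((m : ℝ) * u)
      - ((1 / (u:ℝ)) * (((u:ℝ) - 1) * β + B ^ 2)
        + (1 / (m:ℝ)) * (((m:ℝ) - 1) * β + B ^ 2)) = β / u + β / m := by
    field_simp
    ring
  have hnn : 0 ≤ β / (u:ℝ) + β / (m:ℝ) := by positivity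
  linarith
end

section
/- Let the transductive algorithm be uniformly β-cost-stable. Then |E_S[φ(S)]| ≤ β, where the expectation is over a training set S drawn uniformly at random among all size-m subsets of X. -/
/-- Lemma 5: if the transductive algorithm is uniformly `β`-cost-stable, then
`|E_S[φ(S)]| ≤ β`, the expectation being uniform over all size-`m` training subsets
of the full sample, where `φ(S) = R(h_S) − R̂(h_S)`. -/
theorem stmt_3 {V : Type*} [Fintype V] [DecidableEq V] (m u : ℕ) (hm : 1 ≤ m) (hu : 1 ≤ u)
    (hcard : Fintype.card V = m + u)
    (y : V → ℝ) (h : Finset V → V → ℝ) (β : ℝ)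
    (hstable : ∀ S S' : Finset V, S.card = m → S'.card = m → (S \ S').card = 1 →
      ∀ x : V, |(h S' x - y x) ^ 2 - (h S x - y x) ^ 2| ≤ β) :
    |(∑ S ∈ Finset.powersetCard m (Finset.univ : Finset V),
        ((1 / (u : ℝ)) * ∑ x ∈ Sᶜ, (h S x - y x) ^ 2
          - (1 / (m : ℝ)) * ∑ x ∈ S, (h S x - y x) ^ 2)) /
      ((Finset.powersetCard m (Finset.univ : Finset V)).card : ℝ)| ≤ β := by
  classical
  set c : Finset V → V → ℝ := fun S x => (h S x - y x) ^ 2 with hc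
  set P := Finset.powersetCard m (Finset.univ : Finset V) with hP
  have hmem : ∀ S : Finset V, S ∈ P ↔ S.card = m := fun S => Finset.mem_powersetCard_univ
  have hcompl : ∀ S ∈ P, Sᶜ.card = u := by
    intro S hS
    rw [Finset.card_compl, (hmem S).1 hS, hcard]; omega
  -- basic facts about the swap
  have hswapfacts : ∀ S ∈ P, ∀ x ∈ Sᶜ, ∀ z ∈ S,
      (insert x (S.erase z)) ∈ P ∧ x ∈ insert x (S.erase z) ∧ z ∈ (insert x (S.erase z))ᶜ ∧
      (S \ insert x (S.erase z)).card = 1 := by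
    intro S hS x hx z hz
    have hxS : x ∉ S := Finset.mem_compl.1 hx
    have hxe : x ∉ S.erase z := fun hh => hxS (Finset.mem_of_mem_erase hh)
    have hScard := (hmem S).1 hS
    have hzx : z ≠ x := fun e => hxS (e ▸ hz)
    refine ⟨?_, Finset.mem_insert_self _ _, ?_, ?_⟩
    · rw [hmem, Finset.card_insert_of_notMem hxe, Finset.card_erase_of_mem hz, hScard]
      omega
    · rw [Finset.mem_compl, Finset.mem_insert]
      push_neg
      exact ⟨hzx, Finset.notMem_erase _ _⟩
    · have : S \ insert x (S.erase z) = {z} := by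
        ext w
        simp only [Finset.mem_sdiff, Finset.mem_insert, Finset.mem_erase, Finset.mem_singleton]
        constructor
        · rintro ⟨hw, hw2⟩
          push_neg at hw2
          by_contra hne
          exact (hw2.2 hne) hw
        · rintro rfl
          refine ⟨hz, ?_⟩
          push_neg
          exact ⟨hzx, fun hne => absurd rfl hne⟩
      rw [this, Finset.card_singleton]
  -- the swap bijection on triples
  have hswap : (∑ p ∈ P.sigma (fun S => Sᶜ ×ˢ S), c (insert p.2.1 (p.1.erase p.2.2)) p.2.1)
      = ∑ p ∈ P.sigma (fun S => S ×ˢ Sᶜ), c p.1 p.2.1 := by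
    refine Finset.sum_nbij' (fun p => ⟨insert p.2.1 (p.1.erase p.2.2), p.2⟩)
      (fun p => ⟨insert p.2.2 (p.1.erase p.2.1), p.2⟩) ?_ ?_ ?_ ?_ ?_
    · rintro ⟨S, x, z⟩ hp
      simp only [Finset.mem_sigma, Finset.mem_product] at hp ⊢
      obtain ⟨hS, hx, hz⟩ := hp
      obtain ⟨h1, h2, h3, _⟩ := hswapfacts S hS x hx z hz
      exact ⟨h1, h2, h3⟩
    · rintro ⟨S, x, z⟩ hp
      simp only [Finset.mem_sigma, Finset.mem_product] at hp ⊢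
      obtain ⟨hS, hx, hz⟩ := hp
      obtain ⟨h1, h2, h3, _⟩ := hswapfacts S hS z hz x hx
      exact ⟨h1, h3, h2⟩
    · rintro ⟨S, x, z⟩ hp
      simp only [Finset.mem_sigma, Finset.mem_product] at hp
      obtain ⟨hS, hx, hz⟩ := hp
      have hxS : x ∉ S := Finset.mem_compl.1 hx
      have hxe : x ∉ S.erase z := fun hh => hxS (Finset.mem_of_mem_erase hh)
      simp only [Sigma.mk.inj_iff, heq_eq_eq, and_true]
      rw [Finset.erase_insert hxe, Finset.insert_erase hz]
    · rintro ⟨S, x, z⟩ hp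
      simp only [Finset.mem_sigma, Finset.mem_product] at hp
      obtain ⟨hS, hx, hz⟩ := hp
      have hzS : z ∉ S := Finset.mem_compl.1 hz
      have hze : z ∉ S.erase x := fun hh => hzS (Finset.mem_of_mem_erase hh)
      simp only [Sigma.mk.inj_iff, heq_eq_eq, and_true]
      rw [Finset.erase_insert hze, Finset.insert_erase hx]
    · rintro ⟨S, x, z⟩ _; rfl
  -- triple-sum bound
  set A := ∑ S ∈ P, ∑ x ∈ Sᶜ, c S x with hA
  set B := ∑ S ∈ P, ∑ x ∈ S, c S x with hB
  have hkey : (m : ℝ) * A - (u : ℝ) * B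
      = ∑ S ∈ P, ∑ x ∈ Sᶜ, ∑ z ∈ S, (c S x - c (insert x (S.erase z)) x) := by
    have h1 : ∑ S ∈ P, ∑ x ∈ Sᶜ, ∑ z ∈ S, (c S x - c (insert x (S.erase z)) x)
        = (∑ S ∈ P, ∑ x ∈ Sᶜ, ∑ z ∈ S, c S x)
          - ∑ S ∈ P, ∑ x ∈ Sᶜ, ∑ z ∈ S, c (insert x (S.erase z)) x := by
      simp [Finset.sum_sub_distrib]
    have h2 : ∑ S ∈ P, ∑ x ∈ Sᶜ, ∑ z ∈ S, c S x = (m : ℝ) * A := by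
      rw [hA, Finset.mul_sum]
      refine Finset.sum_congr rfl fun S hS => ?_
      rw [Finset.mul_sum]
      refine Finset.sum_congr rfl fun x hx => ?_
      rw [Finset.sum_const, (hmem S).1 hS, nsmul_eq_mul]
    have h3 : ∑ S ∈ P, ∑ x ∈ Sᶜ, ∑ z ∈ S, c (insert x (S.erase z)) x = (u : ℝ) * B := by
      have e1 : ∑ S ∈ P, ∑ x ∈ Sᶜ, ∑ z ∈ S, c (insert x (S.erase z)) x
          = ∑ p ∈ P.sigma (fun S => Sᶜ ×ˢ S), c (insert p.2.1 (p.1.erase p.2.2)) p.2.1 := by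
        rw [Finset.sum_sigma]
        exact Finset.sum_congr rfl fun S _ => (Finset.sum_product _ _ (fun q => c (insert q.1 (S.erase q.2)) q.1)).symm
      have e2 : ∑ p ∈ P.sigma (fun S => S ×ˢ Sᶜ), c p.1 p.2.1
          = ∑ S ∈ P, ∑ x ∈ S, ∑ z ∈ Sᶜ, c S x := by
        rw [Finset.sum_sigma]
        exact Finset.sum_congr rfl fun S _ => Finset.sum_product _ _ (fun q => c S q.1)
      rw [e1, hswap, e2, hB, Finset.mul_sum]
      refine Finset.sum_congr rfl fun S hS => ?_
      rw [Finset.mul_sum]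
      refine Finset.sum_congr rfl fun x hx => ?_
      rw [Finset.sum_const, hcompl S hS, nsmul_eq_mul]
    rw [h1, h2, h3]
  have hbnd : |(m : ℝ) * A - (u : ℝ) * B| ≤ β * (P.card * u * m) := by
    rw [hkey]
    calc |∑ S ∈ P, ∑ x ∈ Sᶜ, ∑ z ∈ S, (c S x - c (insert x (S.erase z)) x)|
        ≤ ∑ S ∈ P, ∑ x ∈ Sᶜ, ∑ z ∈ S, |c S x - c (insert x (S.erase z)) x| := by
          refine (Finset.abs_sum_le_sum_abs _ _).trans ?_
          refine Finset.sum_le_sum fun S hS => ?_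
          refine (Finset.abs_sum_le_sum_abs _ _).trans ?_
          exact Finset.sum_le_sum fun x hx => Finset.abs_sum_le_sum_abs _ _
      _ ≤ ∑ S ∈ P, ∑ x ∈ Sᶜ, ∑ z ∈ S, β := by
          refine Finset.sum_le_sum fun S hS => Finset.sum_le_sum fun x hx =>
            Finset.sum_le_sum fun z hz => ?_
          obtain ⟨h1, _, _, h4⟩ := hswapfacts S hS x hx z hz
          rw [abs_sub_comm]
          exact hstable S _ ((hmem S).1 hS) ((hmem _).1 h1) h4 x
      _ = β * (P.card * u * m) := by
          rw [Finset.sum_congr rfl (fun S hS => by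
            rw [Finset.sum_congr rfl (fun x _ => by
              rw [Finset.sum_const, (hmem S).1 hS, nsmul_eq_mul]),
              Finset.sum_const, hcompl S hS, nsmul_eq_mul, ← mul_assoc]),
            Finset.sum_const, nsmul_eq_mul]
          ring
  -- assemble
  have hum : (0:ℝ) < (u : ℝ) * m := by positivity
  have hsumphi : ∑ S ∈ P, ((1 / (u : ℝ)) * ∑ x ∈ Sᶜ, c S x - (1 / (m : ℝ)) * ∑ x ∈ S, c S x)
      = (1 / (u : ℝ)) * A - (1 / (m : ℝ)) * B := by
    rw [hA, hB, Finset.sum_sub_distrib, Finset.mul_sum, Finset.mul_sum]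
  have hmne : (m : ℝ) ≠ 0 := by positivity
  have hune : (u : ℝ) ≠ 0 := by positivity
  have hphi : |∑ S ∈ P, ((1 / (u : ℝ)) * ∑ x ∈ Sᶜ, c S x - (1 / (m : ℝ)) * ∑ x ∈ S, c S x)|
      ≤ β * P.card := by
    rw [hsumphi]
    have : (1 / (u : ℝ)) * A - (1 / (m : ℝ)) * B = ((m : ℝ) * A - (u : ℝ) * B) / ((u:ℝ)*m) := by
      field_simp
    rw [this, abs_div, abs_of_pos hum, div_le_iff₀ hum]
    calc |(m : ℝ) * A - (u : ℝ) * B| ≤ β * (P.card * u * m) := hbnd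
      _ = β * P.card * ((u:ℝ) * m) := by ring
  rcases eq_or_ne (P.card : ℝ) 0 with hN | hN
  · rw [hN, div_zero, abs_zero]
    -- need 0 ≤ β : use hstable on an actual swap
    obtain ⟨S, hS⟩ : ∃ S : Finset V, S ∈ P := by
      obtain ⟨S, hS⟩ := Finset.exists_subset_card_eq (show m ≤ (Finset.univ : Finset V).card by
        rw [Finset.card_univ, hcard]; omega)
      exact ⟨S, (hmem S).2 hS.2⟩
    have hScard := (hmem S).1 hS
    have hSc : Sᶜ.Nonempty := by
      rw [← Finset.card_pos, hcompl S hS]; omega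
    have hSne : S.Nonempty := by rw [← Finset.card_pos, hScard]; omega
    obtain ⟨x, hx⟩ := hSc
    obtain ⟨z, hz⟩ := hSne
    obtain ⟨h1, _, _, h4⟩ := hswapfacts S hS x hx z hz
    have := hstable S _ hScard ((hmem _).1 h1) h4 x
    exact le_trans (abs_nonneg _) this
  · have hNpos : (0:ℝ) < P.card := lt_of_le_of_ne (Nat.cast_nonneg _) (Ne.symm hN)
    rw [abs_div, abs_of_pos hNpos, div_le_iff₀ hNpos]
    calc _ ≤ β * P.card := hphi
      _ = β * P.card := rfl
end

section
/- Assume |y_k| ≤ M for all k ∈ [1,m] and |ỹ_k| ≤ M for all k ∈ [1,u]. Let h ∈ H be a minimizer of F(·, S) over H. Then ‖h‖_K ≤ M√(C+C'), and hence for all x ∈ X, |h(x)| ≤ κM√(C+C'). -/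
open scoped RealInnerProductSpace

/-- Lemma 7: bound on the norm and values of the minimizer of the LTR objective.
`H` is an RKHS of functions on the full sample `X = {x_1, …, x_{m+u}}`, represented by
its reproducing elements `k x ∈ H`; the value of a hypothesis `f` at `x` is `⟪f, k x⟫`.
If all labels `y` and pseudo-targets `yt` are bounded by `M` and `K(x,x) ≤ κ²`, then the
minimizer `h` of `F(·, S)` satisfies `‖h‖ ≤ M√(C+C')` and `|h(x)| ≤ κM√(C+C')`. -/
theorem stmt_5 {H : Type*} [NormedAddCommGroup H] [InnerProductSpace ℝ H]
    (m u : ℕ) (hm : 0 < m) (hu : 0 < u)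
    (k : Fin (m + u) → H) (κ M C C' : ℝ)
    (hκ0 : 0 ≤ κ) (hκ : ∀ x : Fin (m + u), ⟪k x, k x⟫ ≤ κ ^ 2)
    (hC : 0 ≤ C) (hC' : 0 ≤ C')
    (y : Fin m → ℝ) (yt : Fin u → ℝ)
    (hy : ∀ i, |y i| ≤ M) (hyt : ∀ i, |yt i| ≤ M)
    (F : H → ℝ)
    (hF : ∀ f : H, F f = ‖f‖ ^ 2
      + (C / m) * ∑ i : Fin m, (⟪f, k (Fin.castAdd u i)⟫ - y i) ^ 2
      + (C' / u) * ∑ i : Fin u, (⟪f, k (Fin.natAdd m i)⟫ - yt i) ^ 2)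
    (h : H) (hmin : ∀ f : H, F h ≤ F f) :
    ‖h‖ ≤ M * Real.sqrt (C + C') ∧
    ∀ x : Fin (m + u), |⟪h, k x⟫| ≤ κ * M * Real.sqrt (C + C') := by
  have hM : 0 ≤ M := le_trans (abs_nonneg _) (hy ⟨0, hm⟩)
  have hF0 : F 0 ≤ (C + C') * M ^ 2 := by
    rw [hF 0]
    have h1 : ∑ i : Fin m, (⟪(0 : H), k (Fin.castAdd u i)⟫ - y i) ^ 2 ≤ m * M ^ 2 := by
      calc ∑ i : Fin m, (⟪(0 : H), k (Fin.castAdd u i)⟫ - y i) ^ 2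
          ≤ ∑ i : Fin m, M ^ 2 := by
            apply Finset.sum_le_sum
            intro i _
            rw [inner_zero_left, zero_sub, neg_sq]
            nlinarith [abs_nonneg (y i), hy i, sq_abs (y i)]
        _ = m * M ^ 2 := by simp [mul_comm]
    have h2 : ∑ i : Fin u, (⟪(0 : H), k (Fin.natAdd m i)⟫ - yt i) ^ 2 ≤ u * M ^ 2 := by
      calc ∑ i : Fin u, (⟪(0 : H), k (Fin.natAdd m i)⟫ - yt i) ^ 2
          ≤ ∑ i : Fin u, M ^ 2 := by
            apply Finset.sum_le_sum
            intro i _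
            rw [inner_zero_left, zero_sub, neg_sq]
            nlinarith [abs_nonneg (yt i), hyt i, sq_abs (yt i)]
        _ = u * M ^ 2 := by simp [mul_comm]
    have hm' : (0:ℝ) < m := by exact_mod_cast hm
    have hu' : (0:ℝ) < u := by exact_mod_cast hu
    have e1 : (C / m) * ∑ i : Fin m, (⟪(0 : H), k (Fin.castAdd u i)⟫ - y i) ^ 2 ≤ C * M ^ 2 := by
      calc (C / m) * ∑ i : Fin m, (⟪(0 : H), k (Fin.castAdd u i)⟫ - y i) ^ 2
          ≤ (C / m) * (m * M ^ 2) :=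
            mul_le_mul_of_nonneg_left h1 (div_nonneg hC hm'.le)
        _ = C * M ^ 2 := by field_simp
    have e2 : (C' / u) * ∑ i : Fin u, (⟪(0 : H), k (Fin.natAdd m i)⟫ - yt i) ^ 2 ≤ C' * M ^ 2 := by
      calc (C' / u) * ∑ i : Fin u, (⟪(0 : H), k (Fin.natAdd m i)⟫ - yt i) ^ 2
          ≤ (C' / u) * (u * M ^ 2) :=
            mul_le_mul_of_nonneg_left h2 (div_nonneg hC' hu'.le)
        _ = C' * M ^ 2 := by field_simp
    have : ‖(0 : H)‖ ^ 2 = 0 := by simp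
    nlinarith [e1, e2]
  have hnorm2 : ‖h‖ ^ 2 ≤ (C + C') * M ^ 2 := by
    have := hmin 0
    rw [hF h] at this
    have hs1 : 0 ≤ (C / m) * ∑ i : Fin m, (⟪h, k (Fin.castAdd u i)⟫ - y i) ^ 2 :=
      mul_nonneg (div_nonneg hC (Nat.cast_nonneg m)) (Finset.sum_nonneg fun i _ => sq_nonneg _)
    have hs2 : 0 ≤ (C' / u) * ∑ i : Fin u, (⟪h, k (Fin.natAdd m i)⟫ - yt i) ^ 2 :=
      mul_nonneg (div_nonneg hC' (Nat.cast_nonneg u)) (Finset.sum_nonneg fun i _ => sq_nonneg _)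
    nlinarith [hF0]
  have hnorm : ‖h‖ ≤ M * Real.sqrt (C + C') := by
    have key : (M * Real.sqrt (C + C')) ^ 2 = (C + C') * M ^ 2 := by
      rw [mul_pow, Real.sq_sqrt (by linarith)]; ring
    have hMnn : 0 ≤ M * Real.sqrt (C + C') := mul_nonneg hM (Real.sqrt_nonneg _)
    nlinarith [norm_nonneg h]
  refine ⟨hnorm, fun x => ?_⟩
  have hkx : ‖k x‖ ≤ κ := by
    have : ‖k x‖ ^ 2 ≤ κ ^ 2 := by
      rw [← real_inner_self_eq_norm_sq]; exact hκ x
    nlinarith [norm_nonneg (k x)]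
  calc |⟪h, k x⟫| ≤ ‖h‖ * ‖k x‖ := abs_real_inner_le_norm h (k x)
    _ ≤ (M * Real.sqrt (C + C')) * κ := by
        apply mul_le_mul hnorm hkx (norm_nonneg _) (mul_nonneg hM (Real.sqrt_nonneg _))
    _ = κ * M * Real.sqrt (C + C') := by ring
end

section
/- Under the LTR setup with |y(x)| ≤ M for all labels and |ỹ(x)|, |ỹ'(x)| ≤ M for all pseudo-targets, for every point x of X: (C/m)·[(h'(x) − y(x))² − (h(x) − y(x))²] + (C'/u)·[(h'(x) − ỹ'(x))² − (h(x) − ỹ(x))²] ≤ 2AM·( κ·‖h' − h‖_K·(C/m + C'/u) + β_loc·C'/u ), where A = 1 + κ√(C + C'). -/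
open scoped RealInnerProductSpace

set_option maxHeartbeats 1000000 in
/-- Lemma 9: under the LTR setup (labels `y` and pseudo-targets `yt`, `yt'` bounded by
`M`, pseudo-targets differing by at most `βloc`), for every point `x` of the full sample,
`(C/m)[c(h',x) − c(h,x)] + (C'/u)[c̃'(h',x) − c̃(h,x)]
  ≤ 2AM(κ‖h'−h‖(C/m + C'/u) + βloc C'/u)` where `A = 1 + κ√(C+C')`.
The RKHS `H` of functions on the full sample is represented by its reproducing elements
`k x ∈ H`, the value of `f` at `x` being `⟪f, k x⟫`; `h` minimizes the objective
`F(·,S)` (training set `S`, pseudo-targets `yt` on the test set `Sᶜ`) and `h'` minimizes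
`F(·,S')`, where `S'` is obtained from `S` by swapping the labeled point `i ∈ S` with
the unlabeled point `j ∉ S`. -/
theorem stmt_7 {H : Type*} [NormedAddCommGroup H] [InnerProductSpace ℝ H]
    (m u : ℕ) (hm : 0 < m) (hu : 0 < u)
    (k : Fin (m + u) → H) (κ M C C' βloc : ℝ)
    (hκ0 : 0 ≤ κ) (hκ : ∀ x : Fin (m + u), ⟪k x, k x⟫ ≤ κ ^ 2)
    (hC : 0 ≤ C) (hC' : 0 ≤ C')
    (y yt yt' : Fin (m + u) → ℝ)
    (hy : ∀ x, |y x| ≤ M) (hyt : ∀ x, |yt x| ≤ M) (hyt' : ∀ x, |yt' x| ≤ M)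
    (hβloc : ∀ x, |yt x - yt' x| ≤ βloc)
    (S S' : Finset (Fin (m + u))) (hS : S.card = m)
    (i j : Fin (m + u)) (hi : i ∈ S) (hj : j ∉ S) (hS' : S' = insert j (S.erase i))
    (F F' : H → ℝ)
    (hF : ∀ f : H, F f = ‖f‖ ^ 2 + (C / m) * ∑ x ∈ S, (⟪f, k x⟫ - y x) ^ 2
      + (C' / u) * ∑ x ∈ Sᶜ, (⟪f, k x⟫ - yt x) ^ 2)
    (hF' : ∀ f : H, F' f = ‖f‖ ^ 2 + (C / m) * ∑ x ∈ S', (⟪f, k x⟫ - y x) ^ 2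
      + (C' / u) * ∑ x ∈ S'ᶜ, (⟪f, k x⟫ - yt' x) ^ 2)
    (h h' : H) (hmin : ∀ f : H, F h ≤ F f) (hmin' : ∀ f : H, F' h' ≤ F' f)
    (A : ℝ) (hA : A = 1 + κ * Real.sqrt (C + C')) :
    ∀ x : Fin (m + u),
      (C / m) * ((⟪h', k x⟫ - y x) ^ 2 - (⟪h, k x⟫ - y x) ^ 2)
        + (C' / u) * ((⟪h', k x⟫ - yt' x) ^ 2 - (⟪h, k x⟫ - yt x) ^ 2)
      ≤ 2 * A * M * (κ * ‖h' - h‖ * (C / m + C' / u) + βloc * (C' / u)) := by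
  have hMnn : 0 ≤ M := (abs_nonneg _).trans (hy i)
  have hmne : (m : ℝ) ≠ 0 := Nat.cast_ne_zero.mpr hm.ne'
  have hune : (u : ℝ) ≠ 0 := Nat.cast_ne_zero.mpr hu.ne'
  have hCm : (0:ℝ) ≤ C / m := div_nonneg hC (Nat.cast_nonneg m)
  have hCu : (0:ℝ) ≤ C' / u := div_nonneg hC' (Nat.cast_nonneg u)
  have hnormk : ∀ z, ‖k z‖ ≤ κ := by
    intro z
    have h1 := hκ z
    rw [real_inner_self_eq_norm_sq] at h1
    nlinarith [norm_nonneg (k z)]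
  have hS'c : S'.card = m := by
    rw [hS', Finset.card_insert_of_notMem (fun hmem => hj (Finset.mem_of_mem_erase hmem)),
      Finset.card_erase_of_mem hi, hS]
    omega
  have key : ∀ (T : Finset (Fin (m+u))) (yv : Fin (m+u) → ℝ) (G : H → ℝ) (g : H),
      T.card = m → (∀ z, |yv z| ≤ M) →
      (∀ f, G f = ‖f‖ ^ 2 + (C / m) * ∑ z ∈ T, (⟪f, k z⟫ - y z) ^ 2
        + (C' / u) * ∑ z ∈ Tᶜ, (⟪f, k z⟫ - yv z) ^ 2) →
      (∀ f, G g ≤ G f) → ‖g‖ ≤ Real.sqrt (C + C') * M := by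
    intro T yv G g hT hyv hG hgmin
    have hTc : Tᶜ.card = u := by
      have := Finset.card_compl T
      rw [hT, Fintype.card_fin] at this
      omega
    have s1 : ∑ z ∈ T, (⟪(0:H), k z⟫ - y z) ^ 2 ≤ m * M ^ 2 := by
      calc ∑ z ∈ T, (⟪(0:H), k z⟫ - y z) ^ 2 ≤ ∑ z ∈ T, M ^ 2 := by
            apply Finset.sum_le_sum
            intro z _
            have := abs_le.mp (hy z)
            simp only [inner_zero_left]
            nlinarith [this.1, this.2]
        _ = m * M ^ 2 := by rw [Finset.sum_const, hT, nsmul_eq_mul]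
    have s2 : ∑ z ∈ Tᶜ, (⟪(0:H), k z⟫ - yv z) ^ 2 ≤ u * M ^ 2 := by
      calc ∑ z ∈ Tᶜ, (⟪(0:H), k z⟫ - yv z) ^ 2 ≤ ∑ z ∈ Tᶜ, M ^ 2 := by
            apply Finset.sum_le_sum
            intro z _
            have := abs_le.mp (hyv z)
            simp only [inner_zero_left]
            nlinarith [this.1, this.2]
        _ = u * M ^ 2 := by rw [Finset.sum_const, hTc, nsmul_eq_mul]
    have hG0 : G 0 ≤ (C + C') * M ^ 2 := by
      rw [hG 0, norm_zero]
      have e1 : C / m * (m * M ^ 2) = C * M ^ 2 := by field_simp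
      have e2 : C' / u * (u * M ^ 2) = C' * M ^ 2 := by field_simp
      nlinarith [mul_le_mul_of_nonneg_left s1 hCm, mul_le_mul_of_nonneg_left s2 hCu]
    have hgsq : ‖g‖ ^ 2 ≤ (C + C') * M ^ 2 := by
      have hGg : ‖g‖ ^ 2 ≤ G g := by
        rw [hG g]
        have n1 : (0:ℝ) ≤ ∑ z ∈ T, (⟪g, k z⟫ - y z) ^ 2 :=
          Finset.sum_nonneg fun z _ => sq_nonneg _
        have n2 : (0:ℝ) ≤ ∑ z ∈ Tᶜ, (⟪g, k z⟫ - yv z) ^ 2 :=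
          Finset.sum_nonneg fun z _ => sq_nonneg _
        nlinarith [mul_nonneg hCm n1, mul_nonneg hCu n2]
      exact hGg.trans ((hgmin 0).trans hG0)
    have hsq : (Real.sqrt (C + C') * M) ^ 2 = (C + C') * M ^ 2 := by
      rw [mul_pow, Real.sq_sqrt (by linarith : (0:ℝ) ≤ C + C')]
    nlinarith [norm_nonneg g, Real.sqrt_nonneg (C + C'), hMnn,
      mul_nonneg (Real.sqrt_nonneg (C + C')) hMnn]
  have hhn : ‖h‖ ≤ Real.sqrt (C + C') * M := key S yt F h hS hyt hF hmin
  have hhn' : ‖h'‖ ≤ Real.sqrt (C + C') * M := key S' yt' F' h' hS'c hyt' hF' hmin'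
  intro x
  set a := ⟪h, k x⟫ with ha
  set b := ⟪h', k x⟫ with hb
  have habs : ∀ (g : H), ‖g‖ ≤ Real.sqrt (C + C') * M → |⟪g, k x⟫| ≤ (A - 1) * M := by
    intro g hg
    calc |⟪g, k x⟫| ≤ ‖g‖ * ‖k x‖ := abs_real_inner_le_norm g (k x)
      _ ≤ (Real.sqrt (C + C') * M) * κ := by
          apply mul_le_mul hg (hnormk x) (norm_nonneg _)
          positivity
      _ = (A - 1) * M := by rw [hA]; ring
  have haa : |a| ≤ (A - 1) * M := habs h hhn
  have hbb : |b| ≤ (A - 1) * M := habs h' hhn'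
  have hd : |b - a| ≤ κ * ‖h' - h‖ := by
    have : b - a = ⟪h' - h, k x⟫ := by rw [inner_sub_left]
    rw [this]
    calc |⟪h' - h, k x⟫| ≤ ‖h' - h‖ * ‖k x‖ := abs_real_inner_le_norm _ _
      _ ≤ ‖h' - h‖ * κ := mul_le_mul_of_nonneg_left (hnormk x) (norm_nonneg _)
      _ = κ * ‖h' - h‖ := by ring
  have hE : ∀ (c : ℝ) (w : Fin (m+u) → ℝ), |c| ≤ (A - 1) * M → (∀ z, |w z| ≤ M) →
      |c - w x| ≤ A * M := by
    intro c w hc hw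
    have h1 := abs_le.mp hc
    have h2 := abs_le.mp (hw x)
    rw [abs_le]
    constructor <;> linarith [h1.1, h1.2, h2.1, h2.2]
  have hay : |a - y x| ≤ A * M := hE a y haa hy
  have hby : |b - y x| ≤ A * M := hE b y hbb hy
  have hayt : |a - yt x| ≤ A * M := hE a yt haa hyt
  have hayt' : |a - yt' x| ≤ A * M := hE a yt' haa hyt'
  have hbyt' : |b - yt' x| ≤ A * M := hE b yt' hbb hyt'
  have hβ := abs_le.mp (hβloc x)
  have hdle := abs_le.mp hd
  have e1 : (b - y x) ^ 2 - (a - y x) ^ 2 ≤ 2 * (κ * ‖h' - h‖) * (A * M) := by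
    have h1 := abs_le.mp hay
    have h2 := abs_le.mp hby
    have p1 : 0 ≤ κ * ‖h' - h‖ - (b - a) := by linarith [hdle.2]
    have p2 : 0 ≤ κ * ‖h' - h‖ + (b - a) := by linarith [hdle.1]
    have q1 : 0 ≤ 2 * (A * M) - (b + a - 2 * y x) := by linarith [h1.2, h2.2]
    have q2 : 0 ≤ 2 * (A * M) + (b + a - 2 * y x) := by linarith [h1.1, h2.1]
    nlinarith [mul_nonneg p1 q2, mul_nonneg p2 q1]
  have e2 : (b - yt' x) ^ 2 - (a - yt x) ^ 2 ≤
      2 * (κ * ‖h' - h‖) * (A * M) + 2 * βloc * (A * M) := by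
    have h1 := abs_le.mp hayt
    have h2 := abs_le.mp hayt'
    have h3 := abs_le.mp hbyt'
    have p1 : 0 ≤ κ * ‖h' - h‖ - (b - a) := by linarith [hdle.2]
    have p2 : 0 ≤ κ * ‖h' - h‖ + (b - a) := by linarith [hdle.1]
    have q1 : 0 ≤ 2 * (A * M) - (b + a - 2 * yt' x) := by linarith [h2.2, h3.2]
    have q2 : 0 ≤ 2 * (A * M) + (b + a - 2 * yt' x) := by linarith [h2.1, h3.1]
    have r1 : 0 ≤ βloc - (yt x - yt' x) := by linarith [hβ.2]
    have r2 : 0 ≤ βloc + (yt x - yt' x) := by linarith [hβ.1]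
    have s1 : 0 ≤ 2 * (A * M) - (2 * a - yt x - yt' x) := by linarith [h1.2, h2.2]
    have s2 : 0 ≤ 2 * (A * M) + (2 * a - yt x - yt' x) := by linarith [h1.1, h2.1]
    nlinarith [mul_nonneg p1 q2, mul_nonneg p2 q1, mul_nonneg r1 s2, mul_nonneg r2 s1]
  calc (C / m) * ((b - y x) ^ 2 - (a - y x) ^ 2)
        + (C' / u) * ((b - yt' x) ^ 2 - (a - yt x) ^ 2)
      ≤ (C / m) * (2 * (κ * ‖h' - h‖) * (A * M))
        + (C' / u) * (2 * (κ * ‖h' - h‖) * (A * M) + 2 * βloc * (A * M)) :=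
        add_le_add (mul_le_mul_of_nonneg_left e1 hCm) (mul_le_mul_of_nonneg_left e2 hCu)
    _ = 2 * A * M * (κ * ‖h' - h‖ * (C / m + C' / u) + βloc * (C' / u)) := by ring
end

section
/- Let Q be a symmetric positive semidefinite n×n real matrix, μ > 0, and let y, y' ∈ ℝⁿ differ in at most two coordinates, with every coordinate of y − y' of absolute value at most M. Then μ⁻¹Q + I is invertible and the vectors h = (μ⁻¹Q + I)⁻¹ y and h' = (μ⁻¹Q + I)⁻¹ y' satisfy ‖h − h'‖_∞ ≤ √2·M. -/
open Matrix

/-- Sup (ℓ^∞) norm of a vector in `Fin n → ℝ`. -/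
noncomputable def vnormInf {n : ℕ} (v : Fin n → ℝ) : ℝ := ⨆ i, |v i|

/-- Score stability of the Consistency Method: for `Q` symmetric positive semidefinite
(the normalized Laplacian), `μ > 0`, and target vectors `y, y'` differing in at most two
coordinates, each coordinate of `y − y'` bounded by `M` in absolute value, the matrix
`μ⁻¹Q + I` is invertible and the predictions `h = (μ⁻¹Q + I)⁻¹ y`,
`h' = (μ⁻¹Q + I)⁻¹ y'` satisfy `‖h − h'‖_∞ ≤ √2·M`. -/
theorem stmt_11 {n : ℕ} (hn : 0 < n)
    (Q : Matrix (Fin n) (Fin n) ℝ) (hQ : Q.PosSemidef)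
    (μ M : ℝ) (hμ : 0 < μ)
    (y y' : Fin n → ℝ)
    (hdiff : (Finset.univ.filter (fun i => y i ≠ y' i)).card ≤ 2)
    (hM : ∀ i, |y i - y' i| ≤ M) :
    IsUnit (μ⁻¹ • Q + 1) ∧
    vnormInf ((μ⁻¹ • Q + 1)⁻¹ *ᵥ y - (μ⁻¹ • Q + 1)⁻¹ *ᵥ y') ≤ Real.sqrt 2 * M := by
  haveI : Nonempty (Fin n) := ⟨⟨0, hn⟩⟩
  classical
  set A := μ⁻¹ • Q + 1 with hAdef
  have hQ' : (μ⁻¹ • Q).PosSemidef := by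
    refine posSemidef_iff_dotProduct_mulVec.2 ⟨?_, ?_⟩
    · unfold Matrix.IsHermitian
      rw [conjTranspose_smul, hQ.1]
      simp
    · intro x
      have := (posSemidef_iff_dotProduct_mulVec.1 hQ).2 x
      simp only [smul_mulVec, dotProduct_smul]
      positivity
  have hA : A.PosDef := Matrix.PosDef.posSemidef_add hQ' Matrix.PosDef.one
  have hUnit : IsUnit A := hA.isUnit
  refine ⟨hUnit, ?_⟩
  set v : Fin n → ℝ := y - y' with hv
  set w : Fin n → ℝ := A⁻¹ *ᵥ v with hw
  have hsub : A⁻¹ *ᵥ y - A⁻¹ *ᵥ y' = w := by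
    rw [hw, hv, mulVec_sub]
  rw [hsub]
  have hMnn : 0 ≤ M := le_trans (abs_nonneg _) (hM ⟨0, hn⟩)
  -- A *ᵥ w = v
  have hAw : A *ᵥ w = v := by
    rw [hw, mulVec_mulVec, Matrix.mul_nonsing_inv _ (isUnit_iff_isUnit_det _ |>.1 hUnit),
      one_mulVec]
  have hdp : ∀ (a b : Fin n → ℝ), a ⬝ᵥ b = ∑ i, a i * b i := fun a b => rfl
  -- ‖w‖² ≤ w ⬝ᵥ v
  have key : w ⬝ᵥ w ≤ w ⬝ᵥ v := by
    calc w ⬝ᵥ w ≤ w ⬝ᵥ ((μ⁻¹ • Q) *ᵥ w) + w ⬝ᵥ w := by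
          have h0 : (0:ℝ) ≤ w ⬝ᵥ ((μ⁻¹ • Q) *ᵥ w) := by simpa using (posSemidef_iff_dotProduct_mulVec.1 hQ').2 w
          linarith
      _ = w ⬝ᵥ (A *ᵥ w) := by rw [hAdef, add_mulVec, one_mulVec, dotProduct_add]
      _ = w ⬝ᵥ v := by rw [hAw]
  -- Cauchy-Schwarz : (w ⬝ᵥ v)² ≤ (w ⬝ᵥ w)(v ⬝ᵥ v)
  have cs : (w ⬝ᵥ v) ^ 2 ≤ (w ⬝ᵥ w) * (v ⬝ᵥ v) := by
    have h := Finset.sum_mul_sq_le_sq_mul_sq Finset.univ w v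
    calc (w ⬝ᵥ v) ^ 2 = (∑ i, w i * v i) ^ 2 := by rw [hdp]
      _ ≤ (∑ i, w i ^ 2) * ∑ i, v i ^ 2 := h
      _ = (w ⬝ᵥ w) * (v ⬝ᵥ v) := by rw [hdp, hdp]; simp [sq]
  have hww : 0 ≤ w ⬝ᵥ w := by
    rw [hdp]; exact Finset.sum_nonneg fun i _ => mul_self_nonneg _
  have hvv0 : 0 ≤ v ⬝ᵥ v := by
    rw [hdp]; exact Finset.sum_nonneg fun i _ => mul_self_nonneg _
  -- w ⬝ᵥ w ≤ v ⬝ᵥ v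
  have hle : w ⬝ᵥ w ≤ v ⬝ᵥ v := by
    rcases eq_or_lt_of_le hww with h0 | hpos
    · rw [← h0]; exact hvv0
    · nlinarith
  -- v ⬝ᵥ v ≤ 2 * M ^ 2
  have hvv : v ⬝ᵥ v ≤ 2 * M ^ 2 := by
    have hsum : v ⬝ᵥ v = ∑ i ∈ Finset.univ.filter (fun i => y i ≠ y' i), v i * v i := by
      rw [hdp]
      refine (Finset.sum_filter_of_ne ?_).symm
      intro i _ h hne
      exact h (by have hz : v i = 0 := by simp [hv, sub_eq_zero.2 hne]
                  rw [hz]; ring)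
    rw [hsum]
    calc ∑ i ∈ Finset.univ.filter (fun i => y i ≠ y' i), v i * v i
        ≤ ∑ _i ∈ Finset.univ.filter (fun i => y i ≠ y' i), M ^ 2 := by
          apply Finset.sum_le_sum
          intro i _
          have hvi : |v i| ≤ M := by simpa [hv] using hM i
          nlinarith [abs_nonneg (v i), sq_abs (v i)]
      _ = (Finset.univ.filter (fun i => y i ≠ y' i)).card * M ^ 2 := by
          rw [Finset.sum_const, nsmul_eq_mul]
      _ ≤ 2 * M ^ 2 := by
          have hc : ((Finset.univ.filter (fun i => y i ≠ y' i)).card : ℝ) ≤ 2 := by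
            exact_mod_cast hdiff
          nlinarith [sq_nonneg M]
  -- conclude coordinatewise
  have hbound : ∀ i, |w i| ≤ Real.sqrt 2 * M := by
    intro i
    have h1 : (w i) ^ 2 ≤ w ⬝ᵥ w := by
      rw [hdp]
      have h' : w i * w i ≤ ∑ j, w j * w j := Finset.single_le_sum (f := fun j => w j * w j)
        (fun j _ => mul_self_nonneg (w j)) (Finset.mem_univ i)
      nlinarith [h']
    have h2 : (w i) ^ 2 ≤ (Real.sqrt 2 * M) ^ 2 := by
      have hs : (Real.sqrt 2 * M) ^ 2 = 2 * M ^ 2 := by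
        rw [mul_pow, Real.sq_sqrt (by norm_num : (0:ℝ) ≤ 2)]
      rw [hs]
      linarith
    exact abs_le_of_sq_le_sq h2 (by positivity)
  unfold vnormInf
  exact ciSup_le hbound
end

section
/- Let m ≥ 2 be an integer and C > 0 a real number. Let N be the m×m real matrix with diagonal entries all equal to 1 + 1/C and off-diagonal entries all equal to −1/(C(m−1)). Then N is invertible, every diagonal entry of N⁻¹ equals 1/m + ((m−1)/m)·C/(C + m/(m−1)), and this value is at least (1/2)·C/(C+1). -/
open Matrix

/-- Lower bound on the stability of the Consistency Method (Theorem 13, matrix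
computation): for `m ≥ 2` and `C > 0`, the `m × m` matrix `N` with diagonal entries
`1 + 1/C` and off-diagonal entries `−1/(C(m−1))` is invertible, every diagonal entry of
`N⁻¹` equals `1/m + ((m−1)/m)·C/(C + m/(m−1))`, and this value is at least
`(1/2)·C/(C+1)`. -/
theorem stmt_12 (m : ℕ) (hm : 2 ≤ m) (C : ℝ) (hC : 0 < C)
    (N : Matrix (Fin m) (Fin m) ℝ)
    (hN : N = Matrix.of fun i j =>
      if i = j then 1 + 1 / C else -(1 / (C * ((m : ℝ) - 1)))) :
    IsUnit N ∧
    (∀ i : Fin m, N⁻¹ i i =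
      1 / (m : ℝ) + (((m : ℝ) - 1) / (m : ℝ)) * (C / (C + (m : ℝ) / ((m : ℝ) - 1)))) ∧
    (1 / 2) * (C / (C + 1)) ≤
      1 / (m : ℝ) + (((m : ℝ) - 1) / (m : ℝ)) * (C / (C + (m : ℝ) / ((m : ℝ) - 1))) := by
  have hm2 : (2:ℝ) ≤ (m:ℝ) := by exact_mod_cast hm
  have hm1 : (1:ℝ) ≤ (m:ℝ) - 1 := by linarith
  have hm1pos : (0:ℝ) < (m:ℝ) - 1 := by linarith
  have hm1ne : ((m:ℝ) - 1) ≠ 0 := ne_of_gt hm1pos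
  have hCne : C ≠ 0 := ne_of_gt hC
  have hmpos : (0:ℝ) < (m:ℝ) := by linarith
  have hmne : (m:ℝ) ≠ 0 := ne_of_gt hmpos
  set a : ℝ := 1 + 1/C + 1/(C*((m:ℝ)-1)) with ha
  set b : ℝ := -(1/(C*((m:ℝ)-1))) with hb
  have hCm1pos : 0 < C * ((m:ℝ)-1) := mul_pos hC hm1pos
  have hapos : 0 < a := by
    have h1 : 0 < 1/C := by positivity
    have h2 : 0 < 1/(C*((m:ℝ)-1)) := by positivity
    simp only [ha]; linarith
  have hane : a ≠ 0 := ne_of_gt hapos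
  have hamb : a + (m:ℝ) * b = 1 := by
    simp only [ha, hb]
    field_simp
    ring
  set J : Matrix (Fin m) (Fin m) ℝ := Matrix.of (fun _ _ => (1:ℝ)) with hJ
  have hJ2 : J * J = (m:ℝ) • J := by
    ext i j
    simp [Matrix.mul_apply, hJ]
  have hNd : N = a • (1 : Matrix (Fin m) (Fin m) ℝ) + b • J := by
    rw [hN]
    ext i j
    by_cases h : i = j
    · simp [h, Matrix.one_apply, hJ, ha, hb]
    · simp [h, Matrix.one_apply_ne h, hJ, hb]
  set M : Matrix (Fin m) (Fin m) ℝ :=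
    (1/a) • (1 : Matrix (Fin m) (Fin m) ℝ) + (-(b/a)) • J with hM
  have key : ∀ (p q : ℝ), (a • (1 : Matrix (Fin m) (Fin m) ℝ) + b • J) *
      (p • (1 : Matrix (Fin m) (Fin m) ℝ) + q • J)
      = (a*p) • (1 : Matrix (Fin m) (Fin m) ℝ) + (a*q + b*p + (m:ℝ)*(b*q)) • J := by
    intro p q
    rw [add_mul, mul_add, mul_add, smul_mul_smul_comm, smul_mul_smul_comm,
      smul_mul_smul_comm, smul_mul_smul_comm, one_mul, mul_one, one_mul, hJ2,
      smul_smul]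
    module
  have coef0 : a*(-(b/a)) + b*(1/a) + (m:ℝ)*(b*(-(b/a))) = 0 := by
    have h1 : (1:ℝ) - a - (m:ℝ)*b = 0 := by linarith
    linear_combination (b/a)*h1
  have hNM : N * M = 1 := by
    rw [hNd, hM, key]
    rw [coef0]
    rw [mul_one_div, div_self hane]
    simp
  have hMN : M * N = 1 := by
    rw [hNd, hM]
    have key2 : ∀ (p q : ℝ), (p • (1 : Matrix (Fin m) (Fin m) ℝ) + q • J) *
        (a • (1 : Matrix (Fin m) (Fin m) ℝ) + b • J)
        = (a*p) • (1 : Matrix (Fin m) (Fin m) ℝ) + (a*q + b*p + (m:ℝ)*(b*q)) • J := by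
      intro p q
      rw [add_mul, mul_add, mul_add, smul_mul_smul_comm, smul_mul_smul_comm,
        smul_mul_smul_comm, smul_mul_smul_comm, one_mul, mul_one, one_mul, hJ2,
        smul_smul]
      module
    rw [key2, coef0, mul_one_div, div_self hane]
    simp
  have hUnit : IsUnit N := ⟨⟨N, M, hNM, hMN⟩, rfl⟩
  have hNinv : N⁻¹ = M := Matrix.inv_eq_right_inv hNM
  have hdiagval : (1 - b)/a =
      1 / (m : ℝ) + (((m : ℝ) - 1) / (m : ℝ)) * (C / (C + (m : ℝ) / ((m : ℝ) - 1))) := by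
    have hden : C + (m:ℝ)/((m:ℝ)-1) > 0 := by positivity
    simp only [ha, hb]
    field_simp
    ring
  refine ⟨hUnit, ?_, ?_⟩
  · intro i
    rw [hNinv, hM]
    simp [Matrix.one_apply, hJ]
    have h2 : a⁻¹ + -(b/a) = (1-b)/a := by field_simp; ring
    rw [h2, hdiagval, one_div]
  · rw [← hdiagval]
    have h1 : (1 - b)/a = (C*((m:ℝ)-1)+1)/(C*((m:ℝ)-1)+(m:ℝ)) := by
      simp only [ha, hb]
      field_simp
      ring
    rw [h1]
    have h2 : 1/2 * (C/(C+1)) = C/(2*(C+1)) := by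
      have hc1 : C + 1 ≠ 0 := by positivity
      field_simp
    rw [h2, div_le_div_iff₀ (by positivity) (by positivity)]
    nlinarith [mul_pos hC hC, mul_pos hCm1pos hC]
end

section
/- Let S and S' be size-m subsets of the vertex set differing in exactly one vertex, and let h and h' be minimizers of the objective hᵀLh + (C/m)·Σ_{i∈S}(h_i − y_i)² (respectively with S') over the subspace {h ∈ ℝⁿ : 𝟙ᵀh = 0}. Assume the hypothesis set is bounded: |h_i − y_i| ≤ M and |h'_i − y_i| ≤ M for all i. Then for every i, |(h_i − y_i)² − (h'_i − y_i)²| ≤ (4CM²/m)·κ², where κ² = max_i (L⁺)_{ii} and L⁺ is the Moore–Penrose pseudoinverse of L; moreover κ² ≤ 1/λ₂, so the bound is at most 4CM²/(mλ₂). -/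
open Matrix

private lemma dot_symm' {n : ℕ} (L : Matrix (Fin n) (Fin n) ℝ) (hLt : Lᵀ = L)
    (a b : Fin n → ℝ) : a ⬝ᵥ (L *ᵥ b) = b ⬝ᵥ (L *ᵥ a) := by
  rw [dotProduct_mulVec, ← mulVec_transpose, hLt, dotProduct_comm]

private lemma psd_nonneg' {n : ℕ} (L : Matrix (Fin n) (Fin n) ℝ) (hL : L.PosSemidef)
    (v : Fin n → ℝ) : 0 ≤ v ⬝ᵥ (L *ᵥ v) := by
  simpa using hL.dotProduct_mulVec_nonneg v

private lemma herm_transpose' {n : ℕ} (L : Matrix (Fin n) (Fin n) ℝ) (hL : L.IsHermitian) :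
    Lᵀ = L := by
  rw [← conjTranspose_eq_transpose_of_trivial]; exact hL

private lemma cs_psd' {n : ℕ} (L : Matrix (Fin n) (Fin n) ℝ) (hL : L.PosSemidef)
    (a b : Fin n → ℝ) :
    (a ⬝ᵥ (L *ᵥ b)) ^ 2 ≤ (a ⬝ᵥ (L *ᵥ a)) * (b ⬝ᵥ (L *ᵥ b)) := by
  have hLt : Lᵀ = L := herm_transpose' L hL.1
  have key : ∀ t : ℝ, 0 ≤ (b ⬝ᵥ (L *ᵥ b)) * (t * t) + (2 * (a ⬝ᵥ (L *ᵥ b))) * t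
      + a ⬝ᵥ (L *ᵥ a) := by
    intro t
    have h0 := psd_nonneg' L hL (a + t • b)
    have expand : (a + t • b) ⬝ᵥ (L *ᵥ (a + t • b)) =
        (b ⬝ᵥ (L *ᵥ b)) * (t * t) + (2 * (a ⬝ᵥ (L *ᵥ b))) * t + a ⬝ᵥ (L *ᵥ a) := by
      simp only [mulVec_add, mulVec_smul, dotProduct_add, add_dotProduct,
        dotProduct_smul, smul_dotProduct, smul_eq_mul, dot_symm' L hLt b a]
      ring
    linarith [expand ▸ h0]
  have hd := discrim_le_zero key
  unfold discrim at hd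
  nlinarith [hd]

private lemma pinv_symm' {n : ℕ} (L Lp : Matrix (Fin n) (Fin n) ℝ) (hLt : Lᵀ = L)
    (hp1 : L * Lp * L = L) (hp2 : Lp * L * Lp = Lp)
    (hp3 : (L * Lp)ᵀ = L * Lp) (hp4 : (Lp * L)ᵀ = Lp * L) : Lpᵀ = Lp := by
  have e1 : Lpᵀ * L = L * Lp := by rw [← hp3, transpose_mul, hLt]
  have e2 : L * Lpᵀ = Lp * L := by rw [← hp4, transpose_mul, hLt]
  have c1 : L * Lpᵀ * L = L := by
    have := congrArg transpose hp1
    rwa [transpose_mul, transpose_mul, hLt, ← Matrix.mul_assoc] at this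
  have c2 : Lpᵀ * L * Lpᵀ = Lpᵀ := by
    have := congrArg transpose hp2
    rwa [transpose_mul, transpose_mul, hLt, ← Matrix.mul_assoc] at this
  have step1 : (L * Lpᵀ) * (L * Lp) = L * Lp := by
    rw [← Matrix.mul_assoc, c1]
  have hACsym : (L * Lpᵀ)ᵀ = L * Lpᵀ := by rw [e2, hp4]
  have step2 : (L * Lp) * (L * Lpᵀ) = L * Lp := by
    have := congrArg transpose step1
    rwa [transpose_mul, hACsym, hp3] at this
  have step3 : Lp * (L * Lpᵀ) = Lp := by
    calc Lp * (L * Lpᵀ) = (Lp * L * Lp) * (L * Lpᵀ) := by rw [hp2]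
      _ = Lp * ((L * Lp) * (L * Lpᵀ)) := by simp only [Matrix.mul_assoc]
      _ = Lp * (L * Lp) := by rw [step2]
      _ = Lp := by rw [← Matrix.mul_assoc, hp2]
  have hCAsym : (Lpᵀ * L)ᵀ = Lpᵀ * L := by rw [e1, hp3]
  have step4' : (Lpᵀ * L) * (Lp * L) = Lpᵀ * L := by
    calc (Lpᵀ * L) * (Lp * L) = Lpᵀ * (L * Lp * L) := by simp only [Matrix.mul_assoc]
      _ = Lpᵀ * L := by rw [hp1]
  have step4 : (Lp * L) * (Lpᵀ * L) = Lpᵀ * L := by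
    have := congrArg transpose step4'
    rwa [transpose_mul, hCAsym, hp4] at this
  calc Lpᵀ = Lpᵀ * L * Lpᵀ := c2.symm
    _ = ((Lp * L) * (Lpᵀ * L)) * Lpᵀ := by rw [step4]
    _ = (Lp * L) * (Lpᵀ * L * Lpᵀ) := by simp only [Matrix.mul_assoc]
    _ = (Lp * L) * Lpᵀ := by rw [c2]
    _ = Lp * (L * Lpᵀ) := by rw [Matrix.mul_assoc]
    _ = Lp := step3

private lemma spec_ineq' {n : ℕ} (L : Matrix (Fin n) (Fin n) ℝ) (hL : L.PosSemidef) (lam2 : ℝ)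
    (hmin2 : ∀ i, hL.1.eigenvalues i ≠ 0 → lam2 ≤ hL.1.eigenvalues i)
    (x : Fin n → ℝ) : lam2 * (x ⬝ᵥ (L *ᵥ x)) ≤ (L *ᵥ x) ⬝ᵥ (L *ᵥ x) := by
  set U : Matrix (Fin n) (Fin n) ℝ := (hL.1.eigenvectorUnitary : Matrix (Fin n) (Fin n) ℝ) with hU
  set d : Fin n → ℝ := hL.1.eigenvalues with hd
  have hspec : L = U * diagonal d * star U := by
    have := hL.1.spectral_theorem
    rwa [RCLike.ofReal_real_eq_id, Function.id_comp] at this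
  have hUU : Uᵀ * U = 1 := by
    have := (Matrix.mem_unitaryGroup_iff').mp hL.1.eigenvectorUnitary.2
    rwa [star_eq_conjTranspose, conjTranspose_eq_transpose_of_trivial] at this
  have hstarU : star U = Uᵀ := by
    rw [star_eq_conjTranspose, conjTranspose_eq_transpose_of_trivial]
  set c : Fin n → ℝ := Uᵀ *ᵥ x with hc
  have hdg : diagonal d *ᵥ c = fun j => d j * c j := by
    ext j; rw [mulVec_diagonal]
  have hLx : L *ᵥ x = U *ᵥ (fun j => d j * c j) := by
    rw [hspec, hstarU, ← mulVec_mulVec, ← mulVec_mulVec, ← hc, hdg]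
  have hvm : x ᵥ* U = c := by rw [hc, mulVec_transpose]
  have hdot1 : x ⬝ᵥ (L *ᵥ x) = ∑ j, d j * c j ^ 2 := by
    rw [hLx, dotProduct_mulVec, hvm]
    simp only [dotProduct]
    exact Finset.sum_congr rfl fun j _ => by ring
  have hdot2 : (L *ᵥ x) ⬝ᵥ (L *ᵥ x) = ∑ j, (d j) ^ 2 * c j ^ 2 := by
    rw [hLx, dotProduct_mulVec, vecMul_mulVec, hUU, vecMul_one]
    simp only [dotProduct]
    exact Finset.sum_congr rfl fun j _ => by ring
  rw [hdot1, hdot2, Finset.mul_sum]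
  apply Finset.sum_le_sum
  intro j _
  rcases eq_or_ne (d j) 0 with h0 | h0
  · simp [h0]
  · have h1 := hmin2 j h0
    have h2 : 0 ≤ d j := hL.eigenvalues_nonneg j
    nlinarith [mul_le_mul_of_nonneg_right h1 (mul_nonneg h2 (sq_nonneg (c j)))]

private lemma min_quad' {n : ℕ} (L : Matrix (Fin n) (Fin n) ℝ) (hLt : Lᵀ = L)
    (r : ℝ) (hr : 0 ≤ r) (y : Fin n → ℝ) (T : Finset (Fin n)) (g δ : Fin n → ℝ)
    (hgs : ∑ i, g i = 0) (hds : ∑ i, δ i = 0)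
    (hmin : ∀ f : Fin n → ℝ, ∑ i, f i = 0 →
      g ⬝ᵥ (L *ᵥ g) + r * ∑ i ∈ T, (g i - y i) ^ 2 ≤
        f ⬝ᵥ (L *ᵥ f) + r * ∑ i ∈ T, (f i - y i) ^ 2) :
    g ⬝ᵥ (L *ᵥ g) + r * ∑ i ∈ T, (g i - y i) ^ 2 + δ ⬝ᵥ (L *ᵥ δ) ≤
      (g + δ) ⬝ᵥ (L *ᵥ (g + δ)) + r * ∑ i ∈ T, ((g + δ) i - y i) ^ 2 := by
  set F0 : ℝ := g ⬝ᵥ (L *ᵥ g) + r * ∑ i ∈ T, (g i - y i) ^ 2 with hF0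
  set A : ℝ := δ ⬝ᵥ (L *ᵥ δ) + r * ∑ i ∈ T, δ i ^ 2 with hA
  set B : ℝ := 2 * (δ ⬝ᵥ (L *ᵥ g)) + 2 * r * ∑ i ∈ T, (g i - y i) * δ i with hB
  have expand : ∀ t : ℝ,
      (g + t • δ) ⬝ᵥ (L *ᵥ (g + t • δ)) + r * ∑ i ∈ T, ((g + t • δ) i - y i) ^ 2
        = F0 + A * (t * t) + B * t := by
    intro t
    have hquad : (g + t • δ) ⬝ᵥ (L *ᵥ (g + t • δ)) =
        g ⬝ᵥ (L *ᵥ g) + (δ ⬝ᵥ (L *ᵥ δ)) * (t * t) + (2 * (δ ⬝ᵥ (L *ᵥ g))) * t := by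
      simp only [mulVec_add, mulVec_smul, dotProduct_add, add_dotProduct,
        dotProduct_smul, smul_dotProduct, smul_eq_mul, dot_symm' L hLt g δ]
      ring
    have hsumq : ∑ i ∈ T, ((g + t • δ) i - y i) ^ 2 =
        ∑ i ∈ T, (g i - y i) ^ 2 + (∑ i ∈ T, δ i ^ 2) * (t * t)
          + (2 * ∑ i ∈ T, (g i - y i) * δ i) * t := by
      have hterm : ∀ i ∈ T, ((g + t • δ) i - y i) ^ 2 =
          (g i - y i) ^ 2 + δ i ^ 2 * (t * t) + 2 * ((g i - y i) * δ i) * t := by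
        intro i _
        simp only [Pi.add_apply, Pi.smul_apply, smul_eq_mul]
        ring
      rw [Finset.sum_congr rfl hterm, Finset.sum_add_distrib, Finset.sum_add_distrib,
        ← Finset.sum_mul, ← Finset.sum_mul, ← Finset.mul_sum]
    rw [hquad, hsumq, hF0, hA, hB]
    ring
  have hq : ∀ t : ℝ, 0 ≤ A * (t * t) + B * t + 0 := by
    intro t
    have hsz : ∑ i, (g + t • δ) i = 0 := by
      simp only [Pi.add_apply, Pi.smul_apply, smul_eq_mul, Finset.sum_add_distrib,
        ← Finset.mul_sum, hgs, hds]
      ring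
    have := hmin (g + t • δ) hsz
    rw [expand t] at this
    simp only [hF0] at this ⊢
    linarith
  have hd := discrim_le_zero hq
  unfold discrim at hd
  have hB0 : B = 0 := by nlinarith [sq_nonneg B]
  have h1 := expand 1
  rw [one_smul] at h1
  have hs2 : 0 ≤ ∑ i ∈ T, δ i ^ 2 := Finset.sum_nonneg fun i _ => sq_nonneg _
  have hre : F0 + A * (1 * 1) + B * 1 = F0 + A := by rw [hB0]; ring
  rw [hre] at h1
  rw [h1, hA]
  nlinarith [mul_nonneg hr hs2]

private lemma proj_eq' {n : ℕ} (hn : 0 < n) (L Lp : Matrix (Fin n) (Fin n) ℝ)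
    (hL1 : L *ᵥ (fun _ => 1) = 0)
    (hker : ∀ v : Fin n → ℝ, L *ᵥ v = 0 → ∃ a : ℝ, v = fun _ => a)
    (hp1 : L * Lp * L = L) (hp4 : (Lp * L)ᵀ = Lp * L)
    (v : Fin n → ℝ) :
    (Lp * L) *ᵥ v = v - ((∑ i, v i) / (n : ℝ)) • (fun _ : Fin n => (1 : ℝ)) := by
  have hnR : (0 : ℝ) < (n : ℝ) := by exact_mod_cast hn
  have hLz : L *ᵥ (v - (Lp * L) *ᵥ v) = 0 := by
    rw [mulVec_sub, mulVec_mulVec, ← Matrix.mul_assoc, hp1, sub_self]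
  obtain ⟨a, ha⟩ := hker _ hLz
  have hsumP : ∑ i, ((Lp * L) *ᵥ v) i = 0 := by
    have h1 : (fun _ => (1 : ℝ)) ⬝ᵥ ((Lp * L) *ᵥ v) = ∑ i, ((Lp * L) *ᵥ v) i := by
      simp [dotProduct]
    rw [← h1, dotProduct_mulVec, ← mulVec_transpose, hp4, ← mulVec_mulVec, hL1,
      mulVec_zero, zero_dotProduct]
  have hsub : ∑ i, (v i - ((Lp * L) *ᵥ v) i) = (n : ℝ) * a := by
    calc ∑ i, (v i - ((Lp * L) *ᵥ v) i) = ∑ i, (v - (Lp * L) *ᵥ v) i := rfl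
      _ = ∑ _i : Fin n, a := by rw [ha]
      _ = (n : ℝ) * a := by
          simp [Finset.sum_const, Finset.card_univ, nsmul_eq_mul]
  have hsv : ∑ i, v i = (n : ℝ) * a := by
    rw [← hsub, Finset.sum_sub_distrib, hsumP, sub_zero]
  have ha' : a = (∑ i, v i) / (n : ℝ) := by
    rw [hsv, mul_comm, mul_div_assoc, div_self hnR.ne', mul_one]
  have hPv : (Lp * L) *ᵥ v = v - (fun _ => a) := by
    rw [← ha]
    funext i
    simp
  rw [hPv]
  congr 1
  funext i
  simp [ha', smul_eq_mul]

set_option maxHeartbeats 2000000 in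
/-- Theorem 17: uniform cost stability of the graph Laplacian regularization algorithm
of Belkin et al.  `L` is the Laplacian of a connected weighted graph on `n = m + u`
vertices (symmetric positive semidefinite, `L𝟙 = 0`, null space spanned by `𝟙`), `Lp`
its Moore–Penrose pseudoinverse (four Penrose conditions), `lam2` its smallest nonzero
eigenvalue, and `κ² = max_i (L⁺)_{ii}`.  If `h` and `h'` minimize the objective
`hᵀLh + (C/m)Σ_{i∈S}(h_i − y_i)²` (resp. with `S'`) over `{h : 𝟙ᵀh = 0}`, where `S, S'`
are size-`m` training sets differing in exactly one vertex, and the hypotheses are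
bounded (`|h_i − y_i| ≤ M`, `|h'_i − y_i| ≤ M`), then for every `i`,
`|(h_i − y_i)² − (h'_i − y_i)²| ≤ (4CM²/m)κ²`; moreover `κ² ≤ 1/λ₂`, so the bound is at
most `4CM²/(mλ₂)`. -/
theorem stmt_15 {m u : ℕ} (hm : 0 < m) (hu : 0 < u)
    (L Lp : Matrix (Fin (m + u)) (Fin (m + u)) ℝ) (hL : L.PosSemidef)
    (hL1 : L *ᵥ (fun _ => 1) = 0)
    (hker : ∀ v : Fin (m + u) → ℝ, L *ᵥ v = 0 → ∃ a : ℝ, v = fun _ => a)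
    (hp1 : L * Lp * L = L) (hp2 : Lp * L * Lp = Lp)
    (hp3 : (L * Lp)ᵀ = L * Lp) (hp4 : (Lp * L)ᵀ = Lp * L)
    (lam2 : ℝ) (hlam2mem : ∃ i, hL.1.eigenvalues i = lam2) (hlam2ne : lam2 ≠ 0)
    (hlam2min : ∀ i, hL.1.eigenvalues i ≠ 0 → lam2 ≤ hL.1.eigenvalues i)
    (C M : ℝ) (hC : 0 ≤ C)
    (y : Fin (m + u) → ℝ) (hy : ∀ i, |y i| ≤ M)
    (S S' : Finset (Fin (m + u))) (hS : S.card = m) (hS' : S'.card = m)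
    (hdiff : (S \ S').card = 1)
    (h h' : Fin (m + u) → ℝ)
    (hsum : ∑ i, h i = 0) (hsum' : ∑ i, h' i = 0)
    (hmin : ∀ g : Fin (m + u) → ℝ, ∑ i, g i = 0 →
      h ⬝ᵥ (L *ᵥ h) + (C / m) * ∑ i ∈ S, (h i - y i) ^ 2 ≤
        g ⬝ᵥ (L *ᵥ g) + (C / m) * ∑ i ∈ S, (g i - y i) ^ 2)
    (hmin' : ∀ g : Fin (m + u) → ℝ, ∑ i, g i = 0 →
      h' ⬝ᵥ (L *ᵥ h') + (C / m) * ∑ i ∈ S', (h' i - y i) ^ 2 ≤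
        g ⬝ᵥ (L *ᵥ g) + (C / m) * ∑ i ∈ S', (g i - y i) ^ 2)
    (hb : ∀ i, |h i - y i| ≤ M) (hb' : ∀ i, |h' i - y i| ≤ M)
    (ksq : ℝ) (hksq : ksq = ⨆ i, Lp i i) :
    (∀ i, |(h i - y i) ^ 2 - (h' i - y i) ^ 2| ≤ (4 * C * M ^ 2 / m) * ksq) ∧
    ksq ≤ 1 / lam2 ∧
    (4 * C * M ^ 2 / m) * ksq ≤ 4 * C * M ^ 2 / ((m : ℝ) * lam2) := by
  have hnpos : 0 < m + u := by omega
  have hne : Nonempty (Fin (m + u)) := ⟨⟨0, hnpos⟩⟩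
  have hLt : Lᵀ = L := herm_transpose' L hL.1
  have hLpt : Lpᵀ = Lp := pinv_symm' L Lp hLt hp1 hp2 hp3 hp4
  have hpsd := psd_nonneg' L hL
  have hproj := proj_eq' hnpos L Lp hL1 hker hp1 hp4
  have hM : 0 ≤ M := le_trans (abs_nonneg _) (hy ⟨0, hnpos⟩)
  have hmR : (0 : ℝ) < (m : ℝ) := by exact_mod_cast hm
  have hrnn : 0 ≤ C / (m : ℝ) := div_nonneg hC hmR.le
  -- diagonal entries of Lp
  have hLpii : ∀ i, (Lp *ᵥ Pi.single i 1) ⬝ᵥ (L *ᵥ (Lp *ᵥ Pi.single i 1)) = Lp i i := by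
    intro i
    rw [mulVec_mulVec, dotProduct_mulVec, vecMul_mulVec, hLpt, ← Matrix.mul_assoc, hp2,
      single_one_vecMul, dotProduct_single, mul_one, row_apply]
  have hLpnn : ∀ i, 0 ≤ Lp i i := fun i => (hLpii i) ▸ hpsd _
  have hksq_ge : ∀ i, Lp i i ≤ ksq := by
    intro i; rw [hksq]; exact le_ciSup (f := fun j => Lp j j) (Finite.bddAbove_range _) i
  have hksq0 : 0 ≤ ksq := le_trans (hLpnn ⟨0, hnpos⟩) (hksq_ge _)
  obtain ⟨j0, hj0⟩ := hlam2mem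
  have hlam2pos : 0 < lam2 := lt_of_le_of_ne (hj0 ▸ hL.eigenvalues_nonneg j0) (Ne.symm hlam2ne)
  -- Part 2 : ksq ≤ 1/lam2
  have hpart2 : ksq ≤ 1 / lam2 := by
    rw [hksq]
    apply ciSup_le
    intro i
    have hsi := spec_ineq' L hL lam2 hlam2min (Lp *ᵥ Pi.single i 1)
    rw [hLpii i] at hsi
    have hLLp : L * Lp = Lp * L := by rw [← hp3, transpose_mul, hLt, hLpt]
    have hsingle : ∑ j, Pi.single i (1 : ℝ) j = 1 := by simp
    have hLw : L *ᵥ (Lp *ᵥ Pi.single i 1) =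
        Pi.single i 1 - ((1 : ℝ) / ((m + u : ℕ) : ℝ)) • (fun _ : Fin (m + u) => (1 : ℝ)) := by
      rw [mulVec_mulVec, hLLp, hproj, hsingle]
    rw [hLw] at hsi
    have hnR : (0 : ℝ) < ((m + u : ℕ) : ℝ) := by exact_mod_cast hnpos
    set s : ℝ := (1 : ℝ) / ((m + u : ℕ) : ℝ) with hs
    have hspos : 0 < s := by positivity
    have hnorm : (Pi.single i 1 - s • (fun _ : Fin (m + u) => (1 : ℝ))) ⬝ᵥ
        (Pi.single i 1 - s • (fun _ : Fin (m + u) => (1 : ℝ))) ≤ 1 := by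
      have h11 : Pi.single i (1 : ℝ) ⬝ᵥ Pi.single i 1 = 1 := by simp
      have h1s : Pi.single i (1 : ℝ) ⬝ᵥ (s • fun _ : Fin (m + u) => (1 : ℝ)) = s := by
        simp [dotProduct_smul, single_dotProduct]
      have hs1 : (s • fun _ : Fin (m + u) => (1 : ℝ)) ⬝ᵥ Pi.single i 1 = s := by
        simp [smul_dotProduct, dotProduct_single]
      have hss : (s • fun _ : Fin (m + u) => (1 : ℝ)) ⬝ᵥ (s • fun _ : Fin (m + u) => (1 : ℝ))
          = ((m + u : ℕ) : ℝ) * s ^ 2 := by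
        rw [smul_dotProduct, dotProduct_smul, smul_eq_mul, smul_eq_mul]
        have hone : (fun _ : Fin (m + u) => (1 : ℝ)) ⬝ᵥ (fun _ : Fin (m + u) => (1 : ℝ))
            = ((m + u : ℕ) : ℝ) := by
          simp [dotProduct]
        rw [hone]; ring
      have hns : ((m + u : ℕ) : ℝ) * s ^ 2 = s := by
        rw [hs]; field_simp
      rw [sub_dotProduct, dotProduct_sub, dotProduct_sub, h11, h1s, hs1, hss, hns]
      linarith
    have h1 : lam2 * Lp i i ≤ 1 := le_trans hsi hnorm
    rw [le_div_iff₀ hlam2pos]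
    linarith [mul_comm lam2 (Lp i i)]
  -- Part 1 : stability
  set Δ : Fin (m + u) → ℝ := h' - h with hΔ
  have hΔa : ∀ i, Δ i = h' i - h i := fun i => rfl
  have hΔsum : ∑ i, Δ i = 0 := by
    simp only [hΔa, Finset.sum_sub_distrib, hsum, hsum', sub_zero]
  have hfix : (Lp * L) *ᵥ Δ = Δ := by
    rw [hproj, hΔsum]; simp
  have hkey : ∀ i, Δ i ^ 2 ≤ ksq * (Δ ⬝ᵥ (L *ᵥ Δ)) := by
    intro i
    have hrepr : ∀ w : Fin (m + u) → ℝ, w i = Pi.single i 1 ⬝ᵥ w := fun w => by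
      rw [single_dotProduct, one_mul]
    have h1 : Δ i = (Lp *ᵥ Pi.single i 1) ⬝ᵥ (L *ᵥ Δ) := by
      conv_lhs => rw [← hfix]
      rw [hrepr ((Lp * L) *ᵥ Δ), ← mulVec_mulVec, dotProduct_mulVec, ← mulVec_transpose, hLpt]
    have hcs := cs_psd' L hL (Lp *ᵥ Pi.single i 1) Δ
    rw [hLpii i] at hcs
    calc Δ i ^ 2 = ((Lp *ᵥ Pi.single i 1) ⬝ᵥ (L *ᵥ Δ)) ^ 2 := by rw [h1]
      _ ≤ Lp i i * (Δ ⬝ᵥ (L *ᵥ Δ)) := hcs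
      _ ≤ ksq * (Δ ⬝ᵥ (L *ᵥ Δ)) := mul_le_mul_of_nonneg_right (hksq_ge i) (hpsd Δ)
  obtain ⟨i0, -, hmax⟩ := Finset.exists_max_image Finset.univ (fun i => |Δ i|)
    ⟨⟨0, hnpos⟩, Finset.mem_univ _⟩
  set β : ℝ := |Δ i0| with hβ
  have hβnn : 0 ≤ β := abs_nonneg _
  have habs : ∀ i, |(h' i - y i) ^ 2 - (h i - y i) ^ 2| ≤ 2 * M * |Δ i| := by
    intro i
    have heq : (h' i - y i) ^ 2 - (h i - y i) ^ 2 = Δ i * ((h' i - y i) + (h i - y i)) := by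
      rw [hΔa]; ring
    rw [heq, abs_mul]
    have h2 : |(h' i - y i) + (h i - y i)| ≤ 2 * M :=
      (abs_add_le _ _).trans (by linarith [hb' i, hb i])
    calc |Δ i| * |(h' i - y i) + (h i - y i)| ≤ |Δ i| * (2 * M) :=
          mul_le_mul_of_nonneg_left h2 (abs_nonneg _)
      _ = 2 * M * |Δ i| := by ring
  have k1 := min_quad' L hLt (C / m) hrnn y S h Δ hsum hΔsum hmin
  have hhd : h + Δ = h' := by
    funext i; show h i + Δ i = h' i; rw [hΔa]; ring
  rw [hhd] at k1
  have hΔnegsum : ∑ i, (-Δ) i = 0 := by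
    simp only [Pi.neg_apply, Finset.sum_neg_distrib, hΔsum, neg_zero]
  have k2 := min_quad' L hLt (C / m) hrnn y S' h' (-Δ) hsum' hΔnegsum hmin'
  have hhd' : h' + -Δ = h := by
    funext i; show h' i + (-Δ) i = h i; simp [hΔa]
  rw [hhd'] at k2
  have hnegdot : (-Δ) ⬝ᵥ (L *ᵥ (-Δ)) = Δ ⬝ᵥ (L *ᵥ Δ) := by
    simp [mulVec_neg, dotProduct_neg, neg_dotProduct]
  rw [hnegdot] at k2
  set E : ℝ := Δ ⬝ᵥ (L *ᵥ Δ) with hE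
  -- combine the two minimality facts
  have hcomb : 2 * E ≤ (C / m) * ((∑ i ∈ S, ((h' i - y i) ^ 2 - (h i - y i) ^ 2))
      - ∑ i ∈ S', ((h' i - y i) ^ 2 - (h i - y i) ^ 2)) := by
    have hsa : ∑ i ∈ S, ((h' i - y i) ^ 2 - (h i - y i) ^ 2)
        = ∑ i ∈ S, (h' i - y i) ^ 2 - ∑ i ∈ S, (h i - y i) ^ 2 :=
      Finset.sum_sub_distrib _ _
    have hsb : ∑ i ∈ S', ((h' i - y i) ^ 2 - (h i - y i) ^ 2)
        = ∑ i ∈ S', (h' i - y i) ^ 2 - ∑ i ∈ S', (h i - y i) ^ 2 :=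
      Finset.sum_sub_distrib _ _
    rw [hsa, hsb, mul_sub, mul_sub, mul_sub]
    linarith [k1, k2]
  obtain ⟨p, hpS⟩ := Finset.card_eq_one.mp hdiff
  have hdiff2 : (S' \ S).card = 1 := by
    rw [← Finset.card_sdiff_comm (hS.trans hS'.symm)]; exact hdiff
  obtain ⟨q, hqS⟩ := Finset.card_eq_one.mp hdiff2
  have hsplit : (∑ i ∈ S, ((h' i - y i) ^ 2 - (h i - y i) ^ 2))
      - ∑ i ∈ S', ((h' i - y i) ^ 2 - (h i - y i) ^ 2)
      = ((h' p - y p) ^ 2 - (h p - y p) ^ 2) - ((h' q - y q) ^ 2 - (h q - y q) ^ 2) := by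
    rw [← Finset.sum_inter_add_sum_sdiff S S' (fun i => (h' i - y i) ^ 2 - (h i - y i) ^ 2),
      ← Finset.sum_inter_add_sum_sdiff S' S (fun i => (h' i - y i) ^ 2 - (h i - y i) ^ 2),
      Finset.inter_comm, hpS, hqS, Finset.sum_singleton, Finset.sum_singleton]
    ring
  have hEb : E ≤ (C / m) * (2 * M * β) := by
    have hbp : ((h' p - y p) ^ 2 - (h p - y p) ^ 2) ≤ 2 * M * β := by
      have h1 := (le_abs_self _).trans (habs p)
      have hmp : |Δ p| ≤ β := hmax p (Finset.mem_univ p)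
      have h2 : 2 * M * |Δ p| ≤ 2 * M * β :=
        mul_le_mul_of_nonneg_left hmp (by positivity)
      linarith
    have hbq : -((h' q - y q) ^ 2 - (h q - y q) ^ 2) ≤ 2 * M * β := by
      have h1 := (neg_le_abs _).trans (habs q)
      have hmq : |Δ q| ≤ β := hmax q (Finset.mem_univ q)
      have h2 : 2 * M * |Δ q| ≤ 2 * M * β :=
        mul_le_mul_of_nonneg_left hmq (by positivity)
      linarith
    have hbig : (∑ i ∈ S, ((h' i - y i) ^ 2 - (h i - y i) ^ 2))
        - ∑ i ∈ S', ((h' i - y i) ^ 2 - (h i - y i) ^ 2) ≤ 4 * M * β := by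
      rw [hsplit]; linarith
    have hfin := hcomb.trans (mul_le_mul_of_nonneg_left hbig hrnn)
    have hre : (C / (m : ℝ)) * (4 * M * β) = 2 * ((C / (m : ℝ)) * (2 * M * β)) := by ring
    rw [hre] at hfin
    linarith
  have hβbound : 2 * M * β ≤ (4 * C * M ^ 2 / m) * ksq := by
    rcases eq_or_lt_of_le hβnn with h0 | h0
    · rw [← h0, mul_zero]
      positivity
    · have hb2 : β ^ 2 ≤ ksq * E := by
        rw [hβ, sq_abs]; exact hkey i0
      have hchain : β ^ 2 ≤ ksq * ((C / m) * (2 * M * β)) :=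
        le_trans hb2 (mul_le_mul_of_nonneg_left hEb hksq0)
      have hmul : β * β ≤ (ksq * (C / m) * (2 * M)) * β := by nlinarith [hchain]
      have hββ : β ≤ ksq * (C / m) * (2 * M) := le_of_mul_le_mul_right hmul h0
      calc 2 * M * β ≤ 2 * M * (ksq * (C / m) * (2 * M)) :=
            mul_le_mul_of_nonneg_left hββ (by positivity)
        _ = (4 * C * M ^ 2 / m) * ksq := by ring
  refine ⟨?_, hpart2, ?_⟩
  · intro i
    calc |(h i - y i) ^ 2 - (h' i - y i) ^ 2|
        = |(h' i - y i) ^ 2 - (h i - y i) ^ 2| := abs_sub_comm _ _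
      _ ≤ 2 * M * |Δ i| := habs i
      _ ≤ 2 * M * β := mul_le_mul_of_nonneg_left (hmax i (Finset.mem_univ i)) (by positivity)
      _ ≤ (4 * C * M ^ 2 / m) * ksq := hβbound
  · have heq : 4 * C * M ^ 2 / ((m : ℝ) * lam2) = (4 * C * M ^ 2 / m) * (1 / lam2) := by
      ring
    rw [heq]
    exact mul_le_mul_of_nonneg_left hpart2 (by positivity)
end

section
/- Let n ≥ 2, and let α_1, …, α_n and y_1, …, y_n satisfy 0 < α_min ≤ α_i ≤ α_max and |y_i| ≤ M for all i. Then removing the n-th pair changes the weighted-average estimate by at most 2α_max·M/(α_min·n): |(Σ_{i=1}^n α_i y_i)/(Σ_{i=1}^n α_i) − (Σ_{i=1}^{n−1} α_i y_i)/(Σ_{i=1}^{n−1} α_i)| ≤ 2α_max·M/(α_min·n). Consequently, if two collections (α_i, y_i)_{i=1}^n and (α'_i, y'_i)_{i=1}^n both satisfy these bounds and differ at exactly one index, their weighted-average estimates differ by at most 4α_max·M/(α_min·n). -/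
open Finset

lemma aux_onestep (S A a b M αmax c : ℝ) (hA : 0 < A) (ha : 0 < a) (haM : a ≤ αmax)
    (hb : |b| ≤ M) (hS : |S| ≤ M * A) (hc : 0 < c) (hcA : c ≤ A + a) :
    |(S + a * b) / (A + a) - S / A| ≤ 2 * αmax * M / c := by
  have hM : 0 ≤ M := le_trans (abs_nonneg b) hb
  have hAa : 0 < A + a := by linarith
  have key : (S + a * b) / (A + a) - S / A = a * (b * A - S) / (A * (A + a)) := by
    field_simp; ring
  rw [key, abs_div, abs_mul, abs_of_pos ha, abs_of_pos (mul_pos hA hAa)]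
  rw [div_le_div_iff₀ (mul_pos hA hAa) hc]
  have h1 : |b * A - S| ≤ 2 * M * A := by
    calc |b * A - S| ≤ |b * A| + |S| := abs_sub _ _
    _ ≤ M * A + M * A := by
        gcongr
        rw [abs_mul, abs_of_pos hA]
        exact mul_le_mul_of_nonneg_right hb hA.le
    _ = 2 * M * A := by ring
  calc a * |b * A - S| * c ≤ a * (2 * M * A) * (A + a) := by gcongr
    _ ≤ αmax * (2 * M * A) * (A + a) := by gcongr
    _ = 2 * αmax * M * (A * (A + a)) := by ring

lemma aux_sums (s : Finset ℕ) (α y : ℕ → ℝ) (αmin M : ℝ) (hαmin : 0 < αmin)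
    (hα : ∀ i ∈ s, αmin ≤ α i) (hy : ∀ i ∈ s, |y i| ≤ M) :
    αmin * s.card ≤ ∑ i ∈ s, α i ∧ |∑ i ∈ s, α i * y i| ≤ M * ∑ i ∈ s, α i := by
  constructor
  · have := Finset.card_nsmul_le_sum s α αmin hα
    simpa [nsmul_eq_mul, mul_comm] using this
  · calc |∑ i ∈ s, α i * y i| ≤ ∑ i ∈ s, |α i * y i| := Finset.abs_sum_le_sum_abs _ _
    _ ≤ ∑ i ∈ s, M * α i := by
        refine Finset.sum_le_sum fun i hi => ?_
        have h0 : 0 ≤ α i := le_of_lt (hαmin.trans_le (hα i hi))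
        rw [abs_mul, abs_of_nonneg h0, mul_comm M (α i)]
        exact mul_le_mul_of_nonneg_left (hy i hi) h0
    _ = M * ∑ i ∈ s, α i := by rw [Finset.mul_sum]

/-- Lemma 21: stability of the weighted-average local estimator.  For `n ≥ 2`, weights
`α_i ∈ [αmin, αmax]` with `αmin > 0` and labels `|y_i| ≤ M` (indices `i < n`),
removing the `n`-th pair changes the weighted-average estimate by at most
`2·αmax·M/(αmin·n)`; consequently, if a second collection `(α', y')` satisfies the same
bounds and differs from `(α, y)` at exactly one index, the two estimates differ by at
most `4·αmax·M/(αmin·n)`. -/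
theorem stmt_17 (n : ℕ) (hn : 2 ≤ n) (α y α' y' : ℕ → ℝ)
    (αmin αmax M : ℝ) (hαmin : 0 < αmin)
    (hα : ∀ i < n, αmin ≤ α i ∧ α i ≤ αmax) (hy : ∀ i < n, |y i| ≤ M)
    (hα' : ∀ i < n, αmin ≤ α' i ∧ α' i ≤ αmax) (hy' : ∀ i < n, |y' i| ≤ M)
    (i₀ : ℕ) (hi₀ : i₀ < n)
    (hdiff : ∀ i < n, i ≠ i₀ → α i = α' i ∧ y i = y' i) :
    |(∑ i ∈ Finset.range n, α i * y i) / (∑ i ∈ Finset.range n, α i) -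
        (∑ i ∈ Finset.range (n - 1), α i * y i) / (∑ i ∈ Finset.range (n - 1), α i)| ≤
      2 * αmax * M / (αmin * n) ∧
    |(∑ i ∈ Finset.range n, α i * y i) / (∑ i ∈ Finset.range n, α i) -
        (∑ i ∈ Finset.range n, α' i * y' i) / (∑ i ∈ Finset.range n, α' i)| ≤
      4 * αmax * M / (αmin * n) := by
  have hnn : (0:ℝ) < (n:ℝ) := Nat.cast_pos.mpr (by omega)
  have hc : (0:ℝ) < αmin * n := mul_pos hαmin hnn
  have hfull := aux_sums (range n) α y αmin M hαmin
    (fun i hi => (hα i (mem_range.1 hi)).1) (fun i hi => hy i (mem_range.1 hi))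
  have hfull' := aux_sums (range n) α' y' αmin M hαmin
    (fun i hi => (hα' i (mem_range.1 hi)).1) (fun i hi => hy' i (mem_range.1 hi))
  rw [card_range] at hfull hfull'
  constructor
  · -- part 1
    have hn1 : n - 1 + 1 = n := by omega
    have e1 : ∑ i ∈ range n, α i * y i
        = (∑ i ∈ range (n-1), α i * y i) + α (n-1) * y (n-1) := by
      conv_lhs => rw [← hn1, sum_range_succ]
    have e2 : ∑ i ∈ range n, α i = (∑ i ∈ range (n-1), α i) + α (n-1) := by
      conv_lhs => rw [← hn1, sum_range_succ]
    have sub := aux_sums (range (n-1)) α y αmin M hαmin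
      (fun i hi => (hα i (by have := mem_range.1 hi; omega)).1)
      (fun i hi => hy i (by have := mem_range.1 hi; omega))
    rw [card_range] at sub
    have hone : (1:ℝ) ≤ ((n-1 : ℕ) : ℝ) := by exact_mod_cast Nat.one_le_iff_ne_zero.2 (by omega)
    have hApos : 0 < ∑ i ∈ range (n-1), α i := by nlinarith [sub.1]
    have hcA : αmin * n ≤ (∑ i ∈ range (n-1), α i) + α (n-1) := by
      rw [← e2]; exact hfull.1
    rw [e1, e2]
    exact aux_onestep _ _ _ _ M αmax _ hApos
      (hαmin.trans_le (hα (n-1) (by omega)).1) (hα (n-1) (by omega)).2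
      (hy (n-1) (by omega)) sub.2 hc hcA
  · -- part 2
    have hmem : i₀ ∈ range n := mem_range.2 hi₀
    have e1 : ∑ i ∈ range n, α i * y i
        = (∑ i ∈ (range n).erase i₀, α i * y i) + α i₀ * y i₀ :=
      (Finset.sum_erase_add _ _ hmem).symm
    have e2 : ∑ i ∈ range n, α i = (∑ i ∈ (range n).erase i₀, α i) + α i₀ :=
      (Finset.sum_erase_add _ _ hmem).symm
    have eS : ∑ i ∈ (range n).erase i₀, α' i * y' i = ∑ i ∈ (range n).erase i₀, α i * y i := by
      refine sum_congr rfl fun i hi => ?_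
      obtain ⟨hne, hilt⟩ := mem_erase.1 hi
      obtain ⟨h1, h2⟩ := hdiff i (mem_range.1 hilt) hne
      rw [h1, h2]
    have eA : ∑ i ∈ (range n).erase i₀, α' i = ∑ i ∈ (range n).erase i₀, α i := by
      refine sum_congr rfl fun i hi => ?_
      obtain ⟨hne, hilt⟩ := mem_erase.1 hi
      exact (hdiff i (mem_range.1 hilt) hne).1.symm
    have e1' : ∑ i ∈ range n, α' i * y' i
        = (∑ i ∈ (range n).erase i₀, α i * y i) + α' i₀ * y' i₀ := by
      rw [← eS]; exact (Finset.sum_erase_add _ _ hmem).symm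
    have e2' : ∑ i ∈ range n, α' i = (∑ i ∈ (range n).erase i₀, α i) + α' i₀ := by
      rw [← eA]; exact (Finset.sum_erase_add _ _ hmem).symm
    have sub := aux_sums ((range n).erase i₀) α y αmin M hαmin
      (fun i hi => (hα i (mem_range.1 (mem_erase.1 hi).2)).1)
      (fun i hi => hy i (mem_range.1 (mem_erase.1 hi).2))
    have hcard : ((range n).erase i₀).card = n - 1 := by
      rw [card_erase_of_mem hmem, card_range]
    rw [hcard] at sub
    have hone : (1:ℝ) ≤ ((n-1 : ℕ) : ℝ) := by exact_mod_cast Nat.one_le_iff_ne_zero.2 (by omega)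
    have hApos : 0 < ∑ i ∈ (range n).erase i₀, α i := by nlinarith [sub.1]
    have hcA : αmin * n ≤ (∑ i ∈ (range n).erase i₀, α i) + α i₀ := by
      rw [← e2]; exact hfull.1
    have hcA' : αmin * n ≤ (∑ i ∈ (range n).erase i₀, α i) + α' i₀ := by
      rw [← e2']; exact hfull'.1
    have t1 := aux_onestep (∑ i ∈ (range n).erase i₀, α i * y i)
      (∑ i ∈ (range n).erase i₀, α i) (α i₀) (y i₀) M αmax (αmin * n) hApos
      (hαmin.trans_le (hα i₀ hi₀).1) (hα i₀ hi₀).2 (hy i₀ hi₀) sub.2 hc hcA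
    have t2 := aux_onestep (∑ i ∈ (range n).erase i₀, α i * y i)
      (∑ i ∈ (range n).erase i₀, α i) (α' i₀) (y' i₀) M αmax (αmin * n) hApos
      (hαmin.trans_le (hα' i₀ hi₀).1) (hα' i₀ hi₀).2 (hy' i₀ hi₀) sub.2 hc hcA'
    rw [e1, e2, e1', e2']
    have tri := abs_sub_le
      (((∑ i ∈ (range n).erase i₀, α i * y i) + α i₀ * y i₀) /
        ((∑ i ∈ (range n).erase i₀, α i) + α i₀))
      ((∑ i ∈ (range n).erase i₀, α i * y i) / (∑ i ∈ (range n).erase i₀, α i))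
      (((∑ i ∈ (range n).erase i₀, α i * y i) + α' i₀ * y' i₀) /
        ((∑ i ∈ (range n).erase i₀, α i) + α' i₀))
    rw [abs_sub_comm ((∑ i ∈ (range n).erase i₀, α i * y i) / (∑ i ∈ (range n).erase i₀, α i))]
      at tri
    have h4 : 4 * αmax * M / (αmin * n)
        = 2 * αmax * M / (αmin * n) + 2 * αmax * M / (αmin * n) := by ring
    linarith
end

section
/- Let x', x_1, …, x_n be points of ℝ^d with ‖x_i − x'‖ ≤ 2r for all i (for instance, all points lie in a ball of radius r), let σ > 0, and define Gaussian-kernel weights α_i = exp(−‖x_i − x'‖²/(2σ²)). Then e^{−2r²/σ²} ≤ α_i ≤ 1 for all i, and for labels bounded by M (|y_i| ≤ M), changing exactly one (point, label) pair changes the weighted-average estimate by at most 4M·e^{2r²/σ²}/n. -/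
set_option maxHeartbeats 1000000


/-- Corollary 22: stability of the kernelized weighted-average local estimator with a
Gaussian kernel.  Points `x_1, …, x_n` satisfy `‖x_i − x'‖ ≤ 2r`, `σ > 0`, and the
weights are `α_i = exp(−‖x_i − x'‖²/(2σ²))`.  Then `e^{−2r²/σ²} ≤ α_i ≤ 1`, and for
labels bounded by `M`, changing exactly one (point, label) pair (i.e. comparing with a
second collection `(α', y')` satisfying the same bounds and differing at exactly one
index) changes the weighted-average estimate by at most `4M·e^{2r²/σ²}/n`. -/
theorem stmt_18 {d : ℕ} (n : ℕ) (hn : 0 < n)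
    (x' : EuclideanSpace ℝ (Fin d)) (x : ℕ → EuclideanSpace ℝ (Fin d))
    (r σ M : ℝ) (hσ : 0 < σ)
    (hx : ∀ i < n, ‖x i - x'‖ ≤ 2 * r)
    (α : ℕ → ℝ) (hα : ∀ i, α i = Real.exp (-‖x i - x'‖ ^ 2 / (2 * σ ^ 2)))
    (y y' : ℕ → ℝ) (hy : ∀ i < n, |y i| ≤ M) (hy' : ∀ i < n, |y' i| ≤ M)
    (α' : ℕ → ℝ) (hα' : ∀ i < n, Real.exp (-2 * r ^ 2 / σ ^ 2) ≤ α' i ∧ α' i ≤ 1)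
    (i₀ : ℕ) (hi₀ : i₀ < n)
    (hdiff : ∀ i < n, i ≠ i₀ → α i = α' i ∧ y i = y' i) :
    (∀ i < n, Real.exp (-2 * r ^ 2 / σ ^ 2) ≤ α i ∧ α i ≤ 1) ∧
    |(∑ i ∈ Finset.range n, α i * y i) / (∑ i ∈ Finset.range n, α i) -
        (∑ i ∈ Finset.range n, α' i * y' i) / (∑ i ∈ Finset.range n, α' i)| ≤
      4 * M * Real.exp (2 * r ^ 2 / σ ^ 2) / n := by
  set a := Real.exp (-2 * r ^ 2 / σ ^ 2) with hadef
  have ha : 0 < a := Real.exp_pos _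
  have hσ2 : (0:ℝ) < σ ^ 2 := by positivity
  have hbounds : ∀ i < n, a ≤ α i ∧ α i ≤ 1 := by
    intro i hi
    rw [hα i]
    constructor
    · apply Real.exp_le_exp.mpr
      rw [div_le_div_iff₀ hσ2 (by positivity)]
      have h1 := hx i hi
      have h0 : (0:ℝ) ≤ ‖x i - x'‖ := norm_nonneg _
      have h2 : ‖x i - x'‖ ^ 2 ≤ 4 * r ^ 2 := by nlinarith
      nlinarith [mul_le_mul_of_nonneg_right h2 hσ2.le]
    · rw [Real.exp_le_one_iff]
      apply div_nonpos_of_nonpos_of_nonneg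
      · simpa using sq_nonneg ‖x i - x'‖
      · positivity
  refine ⟨hbounds, ?_⟩
  set S := ∑ i ∈ Finset.range n, α i with hS
  set S' := ∑ i ∈ Finset.range n, α' i with hS'
  set A := ∑ i ∈ Finset.range n, α i * y i with hA
  set A' := ∑ i ∈ Finset.range n, α' i * y' i with hA'
  clear_value S S' A A'
  have hM : 0 ≤ M := le_trans (abs_nonneg _) (hy i₀ hi₀)
  have hna : (0:ℝ) < n * a := by positivity
  have hSge : (n:ℝ) * a ≤ S := by
    rw [hS]
    calc (n:ℝ) * a = ∑ _i ∈ Finset.range n, a := by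
          simp [mul_comm]
      _ ≤ ∑ i ∈ Finset.range n, α i := Finset.sum_le_sum fun i hi => (hbounds i (Finset.mem_range.mp hi)).1
  have hS'ge : (n:ℝ) * a ≤ S' := by
    rw [hS']
    calc (n:ℝ) * a = ∑ _i ∈ Finset.range n, a := by
          simp [mul_comm]
      _ ≤ ∑ i ∈ Finset.range n, α' i := Finset.sum_le_sum fun i hi => (hα' i (Finset.mem_range.mp hi)).1
  have hSpos : 0 < S := lt_of_lt_of_le hna hSge
  have hS'pos : 0 < S' := lt_of_lt_of_le hna hS'ge
  have hAle : |A| ≤ M * S := by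
    rw [hA, hS]
    calc |∑ i ∈ Finset.range n, α i * y i| ≤ ∑ i ∈ Finset.range n, |α i * y i| := Finset.abs_sum_le_sum_abs _ _
      _ ≤ ∑ i ∈ Finset.range n, M * α i := by
          apply Finset.sum_le_sum
          intro i hi
          have hi' := Finset.mem_range.mp hi
          have h1 := hbounds i hi'
          have h2 := hy i hi'
          rw [abs_mul, abs_of_nonneg (le_trans ha.le h1.1)]
          nlinarith [abs_nonneg (y i)]
      _ = M * ∑ i ∈ Finset.range n, α i := by rw [← Finset.mul_sum]
  have hdS : S - S' = α i₀ - α' i₀ := by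
    rw [hS, hS']
    rw [← Finset.sum_sub_distrib, Finset.sum_eq_single i₀]
    · intro b hb hne
      rw [(hdiff b (Finset.mem_range.mp hb) hne).1, sub_self]
    · intro h; exact absurd (Finset.mem_range.mpr hi₀) h
  have hdA : A - A' = α i₀ * y i₀ - α' i₀ * y' i₀ := by
    rw [hA, hA']
    rw [← Finset.sum_sub_distrib, Finset.sum_eq_single i₀]
    · intro b hb hne
      obtain ⟨e1, e2⟩ := hdiff b (Finset.mem_range.mp hb) hne
      rw [e1, e2, sub_self]
    · intro h; exact absurd (Finset.mem_range.mpr hi₀) h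
  have hdS1 : |S - S'| ≤ 1 := by
    rw [hdS]
    have h1 := hbounds i₀ hi₀
    have h2 := hα' i₀ hi₀
    rw [abs_le]
    constructor <;> nlinarith
  have hdA2 : |A - A'| ≤ 2 * M := by
    rw [hdA]
    have h1 := hbounds i₀ hi₀
    have h2 := hα' i₀ hi₀
    have h3 := hy i₀ hi₀
    have h4 := hy' i₀ hi₀
    have e1 : |α i₀ * y i₀| ≤ M := by
      rw [abs_mul, abs_of_nonneg (le_trans ha.le h1.1)]
      nlinarith [abs_nonneg (y i₀)]
    have e2 : |α' i₀ * y' i₀| ≤ M := by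
      rw [abs_mul, abs_of_nonneg (le_trans ha.le h2.1)]
      nlinarith [abs_nonneg (y' i₀)]
    calc |α i₀ * y i₀ - α' i₀ * y' i₀| ≤ |α i₀ * y i₀| + |α' i₀ * y' i₀| :=
          abs_sub _ _
      _ ≤ 2 * M := by linarith
  have hexp : Real.exp (2 * r ^ 2 / σ ^ 2) = a⁻¹ := by
    rw [hadef, ← Real.exp_neg]
    ring_nf
  rw [div_sub_div _ _ (ne_of_gt hSpos) (ne_of_gt hS'pos), abs_div,
    abs_of_pos (mul_pos hSpos hS'pos)]
  have hnum : |A * S' - S * A'| ≤ 3 * M * S := by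
    have e : A * S' - S * A' = A * (S' - S) + S * (A - A') := by ring
    rw [e]
    calc |A * (S' - S) + S * (A - A')| ≤ |A * (S' - S)| + |S * (A - A')| := abs_add_le _ _
      _ = |A| * |S - S'| + S * |A - A'| := by
          rw [abs_mul, abs_mul, abs_of_pos hSpos, abs_sub_comm S' S]
      _ ≤ (M * S) * 1 + S * (2 * M) := by gcongr
      _ = 3 * M * S := by ring
  calc |A * S' - S * A'| / (S * S') ≤ (3 * M * S) / (S * S') := by gcongr
    _ = 3 * M / S' := by
        rw [show (3:ℝ) * M * S = S * (3 * M) by ring, mul_div_mul_left _ _ hSpos.ne']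
    _ ≤ 3 * M / ((n:ℝ) * a) :=
        div_le_div_of_nonneg_left (by positivity) hna hS'ge
    _ ≤ 4 * M * Real.exp (2 * r ^ 2 / σ ^ 2) / n := by
        rw [hexp]
        rw [div_le_div_iff₀ hna (by exact_mod_cast hn : (0:ℝ) < (n:ℝ))]
        have h4 : 4 * M * a⁻¹ * ((n:ℝ) * a) = 4 * M * n := by
          field_simp
        rw [h4]
        nlinarith [mul_nonneg hM (Nat.cast_nonneg (α := ℝ) n)]
end

section
/- Let x', x_1, …, x_n be points of a real normed space with ‖x_i − x'‖ ≤ 2r for all i, and define inverse-distance weights α_i = 1/(1 + ‖x_i − x'‖). Then 1/(1+2r) ≤ α_i ≤ 1 for all i, and for labels bounded by M (|y_i| ≤ M), removing one (point, label) pair changes the weighted-average estimate by at most 2(2r+1)·M/n. -/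
/-- Corollary 23: stability of the inverse-distance weighted-average local estimator.
Points `x_1, …, x_n` in a real normed space satisfy `‖x_i − x'‖ ≤ 2r`, and the weights
are `α_i = 1/(1 + ‖x_i − x'‖)`.  Then `1/(1+2r) ≤ α_i ≤ 1`, and for labels bounded by
`M`, removing the `n`-th (point, label) pair changes the weighted-average estimate by
at most `2(2r+1)M/n`. -/
theorem stmt_19 {E : Type*} [NormedAddCommGroup E] (n : ℕ) (hn : 0 < n)
    (x' : E) (x : ℕ → E) (r M : ℝ)
    (hx : ∀ i < n, ‖x i - x'‖ ≤ 2 * r)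
    (α : ℕ → ℝ) (hα : ∀ i, α i = 1 / (1 + ‖x i - x'‖))
    (y : ℕ → ℝ) (hy : ∀ i < n, |y i| ≤ M) :
    (∀ i < n, 1 / (1 + 2 * r) ≤ α i ∧ α i ≤ 1) ∧
    |(∑ i ∈ Finset.range n, α i * y i) / (∑ i ∈ Finset.range n, α i) -
        (∑ i ∈ Finset.range (n - 1), α i * y i) / (∑ i ∈ Finset.range (n - 1), α i)| ≤
      2 * (2 * r + 1) * M / n := by
  have hr : 0 ≤ r := by
    have h0 := hx 0 hn
    have := norm_nonneg (x 0 - x')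
    linarith
  have h2r : (0:ℝ) < 1 + 2 * r := by linarith
  have hαb : ∀ i < n, 1 / (1 + 2 * r) ≤ α i ∧ α i ≤ 1 := by
    intro i hi
    have h1 : (0:ℝ) < 1 + ‖x i - x'‖ := by positivity
    rw [hα i]
    constructor
    · exact one_div_le_one_div_of_le h1 (by linarith [hx i hi])
    · rw [div_le_one h1]; linarith [norm_nonneg (x i - x')]
  refine ⟨hαb, ?_⟩
  have hM : 0 ≤ M := le_trans (abs_nonneg _) (hy 0 hn)
  have hαpos : ∀ i < n, 0 < α i := fun i hi =>
    lt_of_lt_of_le (by positivity) (hαb i hi).1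
  obtain ⟨m, rfl⟩ : ∃ m, n = m + 1 := ⟨n - 1, (Nat.succ_pred_eq_of_pos hn).symm⟩
  simp only [Nat.add_sub_cancel]
  set S' := ∑ i ∈ Finset.range m, α i with hS'
  set A' := ∑ i ∈ Finset.range m, α i * y i with hA'
  rw [Finset.sum_range_succ, Finset.sum_range_succ]
  have hmn : m < m + 1 := Nat.lt_succ_self m
  have ham : 0 < α m := hαpos m hmn
  have ham1 : α m ≤ 1 := (hαb m hmn).2
  have hnpos : (0:ℝ) < (m + 1 : ℕ) := by exact_mod_cast hn
  have hSlb : ((m + 1 : ℕ):ℝ) / (1 + 2 * r) ≤ S' + α m := by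
    rw [← Finset.sum_range_succ]
    calc ((m + 1 : ℕ):ℝ) / (1 + 2 * r)
        = ∑ _i ∈ Finset.range (m+1), 1 / (1 + 2 * r) := by
          rw [Finset.sum_const, Finset.card_range, nsmul_eq_mul]; ring
      _ ≤ _ := Finset.sum_le_sum (fun i hi => (hαb i (Finset.mem_range.mp hi)).1)
  have h2 : ((m + 1 : ℕ):ℝ) ≤ (2 * r + 1) * (S' + α m) := by
    rw [div_le_iff₀ h2r] at hSlb
    linarith
  by_cases hm0 : m = 0
  · subst hm0
    simp only [hS', hA', Finset.range_zero, Finset.sum_empty] at *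
    have : (0 + α 0 * y 0) / (0 + α 0) - 0 / 0 = y 0 := by
      rw [zero_add, zero_add, div_zero, sub_zero, mul_div_cancel_left₀ _ ham.ne']
    rw [this]
    have hy0 := hy 0 hn
    have hn1 : ((0 + 1 : ℕ):ℝ) = 1 := by norm_num
    rw [hn1]
    calc |y 0| ≤ M := hy0
      _ ≤ 2 * (2 * r + 1) * M / 1 := by nlinarith
  · have hmpos : 0 < m := Nat.pos_of_ne_zero hm0
    have hS'pos : 0 < S' := Finset.sum_pos
      (fun i hi => hαpos i (lt_trans (Finset.mem_range.mp hi) hmn))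
      (by simp [Finset.nonempty_range_iff, hm0])
    have hSpos : 0 < S' + α m := by linarith
    have hA'le : |A'| ≤ M * S' := by
      calc |A'| ≤ ∑ i ∈ Finset.range m, |α i * y i| := Finset.abs_sum_le_sum_abs _ _
        _ ≤ ∑ i ∈ Finset.range m, α i * M := by
            apply Finset.sum_le_sum
            intro i hi
            have him : i < m + 1 := lt_trans (Finset.mem_range.mp hi) hmn
            rw [abs_mul, abs_of_pos (hαpos i him)]
            exact mul_le_mul_of_nonneg_left (hy i him) (le_of_lt (hαpos i him))
        _ = M * S' := by rw [← Finset.sum_mul]; ring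
    have key : (A' + α m * y m) / (S' + α m) - A' / S' =
        α m * (y m * S' - A') / ((S' + α m) * S') := by
      field_simp
      ring
    rw [key]
    have hnum : |α m * (y m * S' - A')| ≤ 2 * M * S' := by
      rw [abs_mul, abs_of_pos ham]
      have h3 : |y m * S' - A'| ≤ 2 * M * S' := by
        calc |y m * S' - A'| ≤ |y m * S'| + |A'| := abs_sub _ _
          _ ≤ M * S' + M * S' := by
              have := hy m hmn
              rw [abs_mul, abs_of_pos hS'pos]
              gcongr
          _ = 2 * M * S' := by ring
      nlinarith [abs_nonneg (y m * S' - A'), mul_nonneg hM hS'pos.le]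
    rw [abs_div, abs_of_pos (mul_pos hSpos hS'pos),
      div_le_div_iff₀ (mul_pos hSpos hS'pos) hnpos]
    have hkey := mul_le_mul hnum h2 hnpos.le (by positivity : (0:ℝ) ≤ 2 * M * S')
    nlinarith [hkey]
end
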